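/- arXiv:1605.01230 — 2 statements merged into one kernel-verified Lean document; each statement's English description precedes it below -/
import Mathlib

section
/- Every finitely presented DMV-algebra is semisimple. -/
open scoped BigOperators

/-- The unit cube `[0,1]^n` in `ℝ^n`. -/
def Cube (n : ℕ) : Set (Fin n → ℝ) := {x | ∀ i, 0 ≤ x i ∧ x i ≤ 1}

/-- Elements of the free `n`-generated DMV-algebra `DMV_n`: continuous
`[0,1]`-valued functions on the cube that are piecewise linear with rational
coefficients, i.e. there are finitely many affine functions with rational
coefficients such that at every point `f` agrees with one of them. -/
def IsPWLQ {n : ℕ} (f : Cube n → ℝ) : Prop :=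
  Continuous f ∧ (∀ x, 0 ≤ f x ∧ f x ≤ 1) ∧
  ∃ (k : ℕ) (c : Fin k → ℚ) (a : Fin k → Fin n → ℚ),
    ∀ x : Cube n, ∃ j, f x = (c j : ℝ) + ∑ i, (a j i : ℝ) * (x : Fin n → ℝ) i

/-- Elements of the free `n`-generated MV-algebra `MV_n`: continuous
`[0,1]`-valued functions on the cube that are piecewise linear with integer
coefficients. -/
def IsPWLZ {n : ℕ} (f : Cube n → ℝ) : Prop :=
  Continuous f ∧ (∀ x, 0 ≤ f x ∧ f x ≤ 1) ∧
  ∃ (k : ℕ) (c : Fin k → ℤ) (a : Fin k → Fin n → ℤ),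
    ∀ x : Cube n, ∃ j, f x = (c j : ℝ) + ∑ i, (a j i : ℝ) * (x : Fin n → ℝ) i

/-- Ideal of `DMV_n`: a set of elements of `DMV_n` containing `0`, downward closed,
and closed under the pointwise truncated sum `f ⊕ g = min (f + g) 1`. -/
def IsIdealQ {n : ℕ} (J : Set (Cube n → ℝ)) : Prop :=
  (∀ f ∈ J, IsPWLQ f) ∧ ((fun _ => (0 : ℝ)) ∈ J) ∧
  (∀ f ∈ J, ∀ g : Cube n → ℝ, IsPWLQ g → (∀ x, g x ≤ f x) → g ∈ J) ∧
  (∀ f ∈ J, ∀ g ∈ J, (fun x => min (f x + g x) 1) ∈ J)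

/-- `g` belongs to the ideal `(f]` of `DMV_n` generated by `f`. -/
def memGen {n : ℕ} (f g : Cube n → ℝ) : Prop :=
  ∀ J : Set (Cube n → ℝ), IsIdealQ J → f ∈ J → g ∈ J

/-- Maximal ideal of `DMV_n`: a proper ideal maximal under inclusion. -/
def IsMaxIdealQ {n : ℕ} (M : Set (Cube n → ℝ)) : Prop :=
  IsIdealQ M ∧ (∃ g : Cube n → ℝ, IsPWLQ g ∧ g ∉ M) ∧
  ∀ J : Set (Cube n → ℝ), IsIdealQ J → (∃ g : Cube n → ℝ, IsPWLQ g ∧ g ∉ J) →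
    M ⊆ J → J = M

/-- An MV-algebra: an abelian monoid `(A, ⊕, 0)` with an involution `*` satisfying
the Łukasiewicz axioms. -/
class MVAlgebra (A : Type) where
  oplus : A → A → A
  star : A → A
  zero : A
  oplus_assoc : ∀ x y z : A, oplus (oplus x y) z = oplus x (oplus y z)
  oplus_comm : ∀ x y : A, oplus x y = oplus y x
  oplus_zero : ∀ x : A, oplus x zero = x
  star_star : ∀ x : A, star (star x) = x
  lukasiewicz : ∀ x y : A,
    oplus (star (oplus (star x) y)) y = oplus (star (oplus (star y) x)) x
  oplus_star_zero : ∀ x : A, oplus (star zero) x = star zero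

namespace MVAlgebra

variable {A : Type} [MVAlgebra A]

/-- The MV-product `x ⊙ y = (x* ⊕ y*)*`. -/
def odot (x y : A) : A := star (oplus (star x) (star y))

/-- `n`-fold ⊕-sum of an element. -/
def nmul : ℕ → A → A
  | 0, _ => zero
  | n + 1, x => oplus (nmul n x) x

/-- The MV-order: `x ≤ y` iff `x ⊙ y* = 0`. -/
def le (x y : A) : Prop := odot x (star y) = zero

end MVAlgebra

/-- A DMV-algebra: an MV-algebra with division operators `δ_n` (`n ≥ 1`). -/
class DMVAlgebra (A : Type) extends MVAlgebra A where
  delta : ℕ → A → A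
  delta_nmul : ∀ n : ℕ, 1 ≤ n → ∀ x : A, MVAlgebra.nmul n (delta n x) = x
  delta_odot : ∀ n : ℕ, 1 ≤ n → ∀ x : A,
    MVAlgebra.odot (delta n x) (MVAlgebra.nmul (n - 1) (delta n x)) = MVAlgebra.zero

/-- Ideal of an MV-algebra. -/
def IsMVIdeal {A : Type} [MVAlgebra A] (I : Set A) : Prop :=
  MVAlgebra.zero ∈ I ∧ (∀ x ∈ I, ∀ y : A, MVAlgebra.le y x → y ∈ I) ∧
  ∀ x ∈ I, ∀ y ∈ I, MVAlgebra.oplus x y ∈ I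

/-- Maximal ideal of an MV-algebra. -/
def IsMaximalMVIdeal {A : Type} [MVAlgebra A] (I : Set A) : Prop :=
  IsMVIdeal I ∧ I ≠ Set.univ ∧
  ∀ J : Set A, IsMVIdeal J → J ≠ Set.univ → I ⊆ J → J = I

/-- Semisimplicity: the intersection of all maximal ideals is `{0}`. -/
def IsSemisimple (A : Type) [MVAlgebra A] : Prop :=
  ∀ x : A, (∀ I : Set A, IsMaximalMVIdeal I → x ∈ I) → x = MVAlgebra.zero

/-- `π` presents the DMV-algebra `D` as the quotient of the free DMV-algebra `DMV_n`
by the ideal `J`: it is a surjective DMV-homomorphism (with respect to the pointwise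
operations of `DMV_n`) whose kernel is `J`. -/
def IsQuotientByIdeal {n : ℕ} (J : Set (Cube n → ℝ)) (D : Type) [DMVAlgebra D]
    (π : {f : Cube n → ℝ // IsPWLQ f} → D) : Prop :=
  Function.Surjective π ∧
  (∀ f g h : {f : Cube n → ℝ // IsPWLQ f},
    (∀ x, h.1 x = min (f.1 x + g.1 x) 1) → π h = MVAlgebra.oplus (π f) (π g)) ∧
  (∀ f h : {f : Cube n → ℝ // IsPWLQ f},
    (∀ x, h.1 x = 1 - f.1 x) → π h = MVAlgebra.star (π f)) ∧
  (∀ k : ℕ, 1 ≤ k → ∀ f h : {f : Cube n → ℝ // IsPWLQ f},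
    (∀ x, h.1 x = f.1 x / (k : ℝ)) → π h = DMVAlgebra.delta k (π f)) ∧
  (∀ f : {f : Cube n → ℝ // IsPWLQ f}, π f = MVAlgebra.zero ↔ f.1 ∈ J)

namespace MVAlgebra

variable {A : Type} [MVAlgebra A]

lemma zero_oplus (x : A) : oplus zero x = x := by
  rw [oplus_comm]; exact oplus_zero x

lemma oplus_one (x : A) : oplus x (star zero) = star zero := by
  rw [oplus_comm]; exact oplus_star_zero x

lemma star_one : star (star (zero : A)) = zero := star_star zero

lemma oplus_star_self (x : A) : oplus (star x) x = star zero := by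
  have h := lukasiewicz x (star (zero : A))
  rw [oplus_one (star x), star_one, zero_oplus, zero_oplus] at h
  exact h.symm

lemma oplus_self_star (x : A) : oplus x (star x) = star zero := by
  rw [oplus_comm]; exact oplus_star_self x

lemma odot_star_self (x : A) : odot x (star x) = zero := by
  unfold odot
  rw [star_star, oplus_star_self, star_one]

lemma le_top (x : A) : le x (star zero) := by
  unfold le odot
  rw [star_star, oplus_one, star_one]

end MVAlgebra
namespace SSaux

open Matrix

variable {n : ℕ}

lemma pwlq_zero : IsPWLQ (fun _ : Cube n => (0 : ℝ)) := by
  refine ⟨continuous_const, fun x => ⟨le_refl _, zero_le_one⟩, 1, fun _ => 0, fun _ _ => 0, ?_⟩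
  intro x
  exact ⟨0, by simp⟩

lemma pwlq_star {f : Cube n → ℝ} (hf : IsPWLQ f) : IsPWLQ (fun x => 1 - f x) := by
  obtain ⟨hc, hb, k, c, a, hp⟩ := hf
  refine ⟨continuous_const.sub hc,
    fun x => ⟨by dsimp only; linarith [(hb x).2], by dsimp only; linarith [(hb x).1]⟩,
    k, fun j => 1 - c j, fun j i => -(a j i), ?_⟩
  intro x
  obtain ⟨j, hj⟩ := hp x
  refine ⟨j, ?_⟩
  dsimp only
  rw [hj]
  push_cast
  simp only [neg_mul]
  rw [Finset.sum_neg_distrib]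
  ring

lemma pwlq_one : IsPWLQ (fun _ : Cube n => (1 : ℝ)) := by
  have h := pwlq_star (n := n) pwlq_zero
  simpa using h

lemma pwlq_oplus {f g : Cube n → ℝ} (hf : IsPWLQ f) (hg : IsPWLQ g) :
    IsPWLQ (fun x => min (f x + g x) 1) := by
  obtain ⟨hfc, hfb, kf, cf, af, hfp⟩ := hf
  obtain ⟨hgc, hgb, kg, cg, ag, hgp⟩ := hg
  refine ⟨(hfc.add hgc).min continuous_const,
    fun x => ⟨le_min (add_nonneg (hfb x).1 (hgb x).1) zero_le_one, min_le_right _ _⟩, ?_⟩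
  let e : (Fin (kf * kg) ⊕ Fin 1) ≃ Fin (kf * kg + 1) := finSumFinEquiv
  refine ⟨kf * kg + 1,
    fun j => Sum.elim
      (fun p => cf (finProdFinEquiv.symm p).1 + cg (finProdFinEquiv.symm p).2)
      (fun _ => 1) (e.symm j),
    fun j => Sum.elim
      (fun p i => af (finProdFinEquiv.symm p).1 i + ag (finProdFinEquiv.symm p).2 i)
      (fun _ _ => 0) (e.symm j), ?_⟩
  intro x
  obtain ⟨j1, hj1⟩ := hfp x
  obtain ⟨j2, hj2⟩ := hgp x
  rcases le_or_gt (f x + g x) 1 with hle | hlt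
  · refine ⟨e (Sum.inl (finProdFinEquiv (j1, j2))), ?_⟩
    dsimp only
    rw [min_eq_left hle, Equiv.symm_apply_apply]
    simp only [Sum.elim_inl, Equiv.symm_apply_apply]
    rw [hj1, hj2]
    push_cast
    simp only [add_mul]
    rw [Finset.sum_add_distrib]
    ring
  · refine ⟨e (Sum.inr 0), ?_⟩
    dsimp only
    rw [min_eq_right hlt.le, Equiv.symm_apply_apply]
    simp

end SSaux
namespace SSaux

variable {n : ℕ}

/-- the truncated multiple `min (k·f) 1`. -/
def truncN (f : Cube n → ℝ) (k : ℕ) : Cube n → ℝ := fun x => min ((k : ℝ) * f x) 1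

lemma truncN_zero (f : Cube n → ℝ) : truncN f 0 = fun _ => (0 : ℝ) := by
  funext x; simp [truncN]

lemma truncN_succ {f : Cube n → ℝ} (hf : IsPWLQ f) (k : ℕ) :
    truncN f (k + 1) = fun x => min (truncN f k x + f x) 1 := by
  funext x
  have h0 : 0 ≤ f x := (hf.2.1 x).1
  have hk1 : (((k + 1 : ℕ)) : ℝ) * f x = (k : ℝ) * f x + f x := by push_cast; ring
  unfold truncN
  rw [hk1]
  rcases le_or_gt ((k : ℝ) * f x) 1 with h | h
  · rw [min_eq_left h]
  · rw [min_eq_right h.le, min_eq_right (by linarith), min_eq_right (by linarith)]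

lemma pwlq_truncN {f : Cube n → ℝ} (hf : IsPWLQ f) (k : ℕ) : IsPWLQ (truncN f k) := by
  induction k with
  | zero => rw [truncN_zero]; exact pwlq_zero
  | succ k ih => rw [truncN_succ hf]; exact pwlq_oplus ih hf

lemma ideal_truncN {J : Set (Cube n → ℝ)} (hJ : IsIdealQ J) {f : Cube n → ℝ}
    (hfJ : f ∈ J) (hf : IsPWLQ f) (k : ℕ) : truncN f k ∈ J := by
  induction k with
  | zero => rw [truncN_zero]; exact hJ.2.1
  | succ k ih => rw [truncN_succ hf]; exact hJ.2.2.2 _ ih _ hfJ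

lemma memGen_of_le {f₀ g : Cube n → ℝ} (hf₀ : IsPWLQ f₀) (hg : IsPWLQ g)
    {k : ℕ} (hk : ∀ x, g x ≤ (k : ℝ) * f₀ x) : memGen f₀ g := by
  intro J hJ hf₀J
  have h1 : truncN f₀ k ∈ J := ideal_truncN hJ hf₀J hf₀ k
  exact hJ.2.2.1 _ h1 g hg (fun x => le_min (hk x) (hg.2.1 x).2)

lemma memGen_zero_at {f₀ : Cube n → ℝ} (hf₀ : IsPWLQ f₀) {p : Cube n} (hp : f₀ p = 0)
    {w : Cube n → ℝ} (hw : memGen f₀ w) : w p = 0 := by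
  have hJ : IsIdealQ {h : Cube n → ℝ | IsPWLQ h ∧ h p = 0} := by
    refine ⟨fun f hf => hf.1, ⟨pwlq_zero, rfl⟩, ?_, ?_⟩
    · rintro f ⟨hf, hfp⟩ g hg hle
      exact ⟨hg, le_antisymm (hfp ▸ hle p) (hg.2.1 p).1⟩
    · rintro f ⟨hf, hfp⟩ g ⟨hg, hgp⟩
      refine ⟨pwlq_oplus hf hg, ?_⟩
      simp [hfp, hgp]
  exact (hw _ hJ ⟨hf₀, hp⟩).2

section Quot

variable {f₀ : Cube n → ℝ} {D : Type} [DMVAlgebra D]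
  {π : {f : Cube n → ℝ // IsPWLQ f} → D}

open MVAlgebra

/-- subtype versions of the basic operations -/
def zeroF : {f : Cube n → ℝ // IsPWLQ f} := ⟨fun _ => 0, pwlq_zero (n := n)⟩

def oneF : {f : Cube n → ℝ // IsPWLQ f} := ⟨fun _ => 1, pwlq_one (n := n)⟩

def starF (F : {f : Cube n → ℝ // IsPWLQ f}) : {f : Cube n → ℝ // IsPWLQ f} :=
  ⟨fun x => 1 - F.1 x, pwlq_star F.2⟩

def oplusF (F G : {f : Cube n → ℝ // IsPWLQ f}) : {f : Cube n → ℝ // IsPWLQ f} :=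
  ⟨fun x => min (F.1 x + G.1 x) 1, pwlq_oplus F.2 G.2⟩

/-- the function `max (F - G) 0` in composite form -/
def subF (F G : {f : Cube n → ℝ // IsPWLQ f}) : {f : Cube n → ℝ // IsPWLQ f} :=
  starF (oplusF (starF F) G)

def truncF (F : {f : Cube n → ℝ // IsPWLQ f}) (k : ℕ) : {f : Cube n → ℝ // IsPWLQ f} :=
  ⟨truncN F.1 k, pwlq_truncN F.2 k⟩

variable (hπ : IsQuotientByIdeal {g | memGen f₀ g} D π)
include hπ

lemma pi_zero : π zeroF = MVAlgebra.zero := by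
  refine (hπ.2.2.2.2 zeroF).2 ?_
  intro J hJ _
  exact hJ.2.1

lemma pi_star (F : {f : Cube n → ℝ // IsPWLQ f}) : π (starF F) = MVAlgebra.star (π F) :=
  hπ.2.2.1 F (starF F) (fun _ => rfl)

lemma pi_oplus (F G : {f : Cube n → ℝ // IsPWLQ f}) :
    π (oplusF F G) = oplus (π F) (π G) :=
  hπ.2.1 F G (oplusF F G) (fun _ => rfl)

lemma pi_one : π oneF = MVAlgebra.star MVAlgebra.zero := by
  have h : π (starF zeroF) = MVAlgebra.star (π zeroF) := pi_star hπ zeroF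
  have he : oneF = starF (zeroF (n := n)) := by
    apply Subtype.ext; funext x; simp [oneF, starF, zeroF]
  rw [he, h, pi_zero hπ]

lemma pi_sub (F G : {f : Cube n → ℝ // IsPWLQ f}) :
    π (subF F G) = odot (π F) (MVAlgebra.star (π G)) := by
  unfold subF odot
  rw [pi_star hπ, pi_oplus hπ, pi_star hπ, MVAlgebra.star_star]

lemma pi_trunc (F : {f : Cube n → ℝ // IsPWLQ f}) (k : ℕ) :
    π (truncF F k) = nmul k (π F) := by
  induction k with
  | zero =>
      have he : truncF F 0 = zeroF (n := n) := by
        apply Subtype.ext; simp [truncF, truncN_zero, zeroF]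
      rw [he, pi_zero hπ]; rfl
  | succ k ih =>
      have he : truncF F (k + 1) = oplusF (truncF F k) F := by
        apply Subtype.ext; simp only [truncF, oplusF]; exact truncN_succ F.2 k
      rw [he, pi_oplus hπ, ih]; rfl

/-- key extraction : if `π F = π G` then `F ≤ G` at every zero of `f₀`. -/
lemma le_at_zero (hf₀ : IsPWLQ f₀) {p : Cube n} (hp : f₀ p = 0)
    {F G : {f : Cube n → ℝ // IsPWLQ f}} (h : π F = π G) : F.1 p ≤ G.1 p := by
  have h1 : π (subF F G) = MVAlgebra.zero := by
    rw [pi_sub hπ, h]; exact odot_star_self (π G)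
  have h2 : memGen f₀ (subF F G).1 := (hπ.2.2.2.2 _).1 h1
  have h3 : (subF F G).1 p = 0 := memGen_zero_at hf₀ hp h2
  simp only [subF, starF, oplusF] at h3
  have h4 : min (1 - F.1 p + G.1 p) 1 = 1 := by linarith
  rcases le_or_gt (1 - F.1 p + G.1 p) 1 with h5 | h5
  · rw [min_eq_left h5] at h4; linarith
  · linarith

end Quot

end SSaux
namespace SSaux

open Matrix

/-- dot product with a fixed right factor, as a linear map -/
def dotLin {n : ℕ} (v : Fin n → ℝ) : (Fin n → ℝ) →ₗ[ℝ] ℝ where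
  toFun p := p ⬝ᵥ v
  map_add' p q := add_dotProduct p q v
  map_smul' c p := by simp [smul_dotProduct, smul_eq_mul]

@[simp] lemma dotLin_apply {n : ℕ} (v p : Fin n → ℝ) : dotLin v p = p ⬝ᵥ v := rfl

lemma exists_generic_vec {n : ℕ} (A : Set (Fin n → ℝ)) (hA : A.Finite)
    (h0 : ∀ a ∈ A, a ≠ 0) :
    ∃ v : Fin n → ℝ, ∀ a ∈ A, a ⬝ᵥ v ≠ 0 := by
  classical
  let P : (Fin n → ℝ) → Polynomial ℝ :=
    fun a => ∑ i : Fin n, Polynomial.C (a i) * Polynomial.X ^ ((i : ℕ) + 1)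
  have hPne : ∀ a ∈ A, P a ≠ 0 := by
    intro a ha hP
    obtain ⟨i0, hi0⟩ := Function.ne_iff.1 (h0 a ha)
    have hc : (P a).coeff ((i0 : ℕ) + 1) = a i0 := by
      simp only [P, Polynomial.finset_sum_coeff]
      rw [Finset.sum_eq_single i0]
      · rw [Polynomial.coeff_C_mul, Polynomial.coeff_X_pow, if_pos rfl]; ring
      · intro b _ hb
        rw [Polynomial.coeff_C_mul, Polynomial.coeff_X_pow, if_neg, mul_zero]
        intro hbb
        exact hb (Fin.ext (Nat.add_right_cancel hbb)).symm
      · intro h; exact absurd (Finset.mem_univ i0) h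
    rw [hP] at hc
    simp only [Polynomial.coeff_zero] at hc
    simp only [Pi.zero_apply] at hi0
    exact hi0 hc.symm
  have hbad : (⋃ a ∈ A, {t : ℝ | (P a).IsRoot t}).Finite :=
    hA.biUnion (fun a ha => Polynomial.finite_setOf_isRoot (hPne a ha))
  obtain ⟨t, _, ht⟩ := Set.infinite_univ.exists_notMem_finite hbad
  refine ⟨fun i => t ^ ((i : ℕ) + 1), ?_⟩
  intro a ha hdot
  apply ht
  refine Set.mem_biUnion ha ?_
  show (P a).IsRoot t
  unfold Polynomial.IsRoot
  rw [Polynomial.eval_finset_sum]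
  simpa [dotProduct] using hdot

lemma exists_perp {n : ℕ} (S : Set (Fin n → ℝ))
    (h : Submodule.span ℝ S ≠ ⊤) :
    ∃ v : Fin n → ℝ, v ≠ 0 ∧ ∀ p ∈ S, p ⬝ᵥ v = 0 := by
  classical
  obtain ⟨f, hf0, hfmap⟩ :=
    Submodule.exists_dual_map_eq_bot_of_lt_top (lt_top_iff_ne_top.2 h) inferInstance
  set v : Fin n → ℝ := fun i => f (Pi.single i 1) with hv
  have hfv : ∀ p : Fin n → ℝ, f p = p ⬝ᵥ v := by
    intro p
    have hrep : p = ∑ i : Fin n, p i • (Pi.single i (1 : ℝ) : Fin n → ℝ) := by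
      funext j
      rw [Finset.sum_apply]
      simp [Pi.single_apply]
    conv_lhs => rw [hrep]
    rw [map_sum]
    simp only [LinearMap.map_smul, smul_eq_mul]
    rfl
  refine ⟨v, ?_, ?_⟩
  · intro hv0
    apply hf0
    apply LinearMap.ext
    intro p
    rw [hfv, hv0, dotProduct_zero]
    rfl
  · intro p hp
    have h1 : f p ∈ Submodule.map f (Submodule.span ℝ S) :=
      Submodule.mem_map_of_mem (Submodule.subset_span hp)
    rw [hfmap, Submodule.mem_bot] at h1
    rw [← hfv]; exact h1

lemma basic_points_finite {n : ℕ} (Q : Set ((Fin n → ℝ) × ℝ)) (hQ : Q.Finite) :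
    {y : Fin n → ℝ | Submodule.span ℝ {p | ∃ b, (p, b) ∈ Q ∧ p ⬝ᵥ y = b} = ⊤}.Finite := by
  classical
  set act : (Fin n → ℝ) → Set ((Fin n → ℝ) × ℝ) := fun y => {q ∈ Q | q.1 ⬝ᵥ y = q.2}
    with hact
  apply Set.Finite.of_finite_image (f := act)
  · refine hQ.finite_subsets.subset ?_
    rintro s ⟨y, _, rfl⟩
    exact Set.sep_subset _ _
  · intro y1 h1 y2 _ heq
    have hw : {p : Fin n → ℝ | ∃ b, (p, b) ∈ Q ∧ p ⬝ᵥ y1 = b} ⊆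
        LinearMap.ker (dotLin (y1 - y2)) := by
      rintro p ⟨b, hbQ, hb1⟩
      have hp2 : p ⬝ᵥ y2 = b := by
        have hmem : (p, b) ∈ act y1 := ⟨hbQ, hb1⟩
        rw [heq] at hmem
        exact hmem.2
      rw [SetLike.mem_coe, LinearMap.mem_ker, dotLin_apply, dotProduct_sub, hb1,
        hp2, sub_self]
    have hker := Submodule.span_le.2 hw
    have h3 : (y1 - y2) ⬝ᵥ (y1 - y2) = 0 := by
      have hmem : y1 - y2 ∈ Submodule.span ℝ {p | ∃ b, (p, b) ∈ Q ∧ p ⬝ᵥ y1 = b} := by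
        rw [Set.mem_setOf_eq] at h1
        rw [h1]
        exact Submodule.mem_top
      have h4 := hker hmem
      rw [LinearMap.mem_ker, dotLin_apply] at h4
      exact h4
    exact sub_eq_zero.1 (dotProduct_self_eq_zero.1 h3)

end SSaux
namespace SSaux

open Matrix

lemma hull_move {n : ℕ} (Q : Set ((Fin n → ℝ) × ℝ)) (hQ : Q.Finite)
    (hcube : ∀ i : Fin n, ((Pi.single i 1 : Fin n → ℝ), (1 : ℝ)) ∈ Q ∧
      ((-Pi.single i 1 : Fin n → ℝ), (0 : ℝ)) ∈ Q)
    {x : Fin n → ℝ} (hx : ∀ q ∈ Q, q.1 ⬝ᵥ x ≤ q.2)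
    {v : Fin n → ℝ} (hv : v ≠ 0)
    (hperp : ∀ p ∈ {p : Fin n → ℝ | ∃ b, (p, b) ∈ Q ∧ p ⬝ᵥ x = b}, p ⬝ᵥ v = 0) :
    ∃ t : ℝ, 0 < t ∧ (∀ q ∈ Q, q.1 ⬝ᵥ (x + t • v) ≤ q.2) ∧
      Submodule.span ℝ {p : Fin n → ℝ | ∃ b, (p, b) ∈ Q ∧ p ⬝ᵥ x = b} <
      Submodule.span ℝ {p : Fin n → ℝ | ∃ b, (p, b) ∈ Q ∧ p ⬝ᵥ (x + t • v) = b} := by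
  classical
  obtain ⟨i, hi⟩ := Function.ne_iff.1 hv
  simp only [Pi.zero_apply] at hi
  -- find a constraint with positive slope along v
  have hq0 : ∃ q0 ∈ Q, 0 < q0.1 ⬝ᵥ v := by
    rcases lt_or_gt_of_ne hi with hneg | hpos
    · refine ⟨((-Pi.single i 1 : Fin n → ℝ), (0 : ℝ)), (hcube i).2, ?_⟩
      rw [neg_dotProduct, single_dotProduct, one_mul]
      linarith
    · refine ⟨((Pi.single i 1 : Fin n → ℝ), (1 : ℝ)), (hcube i).1, ?_⟩
      rw [single_dotProduct, one_mul]
      exact hpos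
  obtain ⟨q0, hq0Q, hq0v⟩ := hq0
  set Qv : Finset ((Fin n → ℝ) × ℝ) := hQ.toFinset.filter (fun q => 0 < q.1 ⬝ᵥ v) with hQv
  have hq0mem : q0 ∈ Qv := by
    rw [hQv, Finset.mem_filter, Set.Finite.mem_toFinset]
    exact ⟨hq0Q, hq0v⟩
  have hQvne : Qv.Nonempty := ⟨q0, hq0mem⟩
  set ρ : ((Fin n → ℝ) × ℝ) → ℝ := fun q => (q.2 - q.1 ⬝ᵥ x) / (q.1 ⬝ᵥ v) with hρ
  set t : ℝ := Qv.inf' hQvne ρ with htdef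
  have hmemQ : ∀ q ∈ Qv, q ∈ Q ∧ 0 < q.1 ⬝ᵥ v := by
    intro q hq
    rw [hQv, Finset.mem_filter, Set.Finite.mem_toFinset] at hq
    exact hq
  have hρpos : ∀ q ∈ Qv, 0 < ρ q := by
    intro q hq
    obtain ⟨hqQ, hqv⟩ := hmemQ q hq
    have hnum : q.1 ⬝ᵥ x < q.2 := by
      rcases lt_or_eq_of_le (hx q hqQ) with h | h
      · exact h
      · exact absurd (hperp q.1 ⟨q.2, by simpa using hqQ, h⟩) (ne_of_gt hqv)
    exact div_pos (by linarith) hqv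
  have ht : 0 < t := (Finset.lt_inf'_iff hQvne).2 hρpos
  refine ⟨t, ht, ?_, ?_⟩
  · intro q hqQ
    rw [dotProduct_add, dotProduct_smul, smul_eq_mul]
    rcases le_or_gt (q.1 ⬝ᵥ v) 0 with hle | hpos
    · have : t * (q.1 ⬝ᵥ v) ≤ 0 := mul_nonpos_of_nonneg_of_nonpos ht.le hle
      linarith [hx q hqQ]
    · have hqQv : q ∈ Qv := by
        rw [hQv, Finset.mem_filter, Set.Finite.mem_toFinset]
        exact ⟨hqQ, hpos⟩
      have h1 : t ≤ ρ q := Finset.inf'_le ρ hqQv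
      have h2 : t * (q.1 ⬝ᵥ v) ≤ ρ q * (q.1 ⬝ᵥ v) :=
        mul_le_mul_of_nonneg_right h1 hpos.le
      rw [hρ] at h2
      rw [div_mul_cancel₀ _ (ne_of_gt hpos)] at h2
      linarith
  · obtain ⟨qm, hqmQv, hqm⟩ := Finset.exists_mem_eq_inf' hQvne ρ
    obtain ⟨hqmQ, hqmv⟩ := hmemQ qm hqmQv
    have hsub : {p : Fin n → ℝ | ∃ b, (p, b) ∈ Q ∧ p ⬝ᵥ x = b} ⊆
        {p : Fin n → ℝ | ∃ b, (p, b) ∈ Q ∧ p ⬝ᵥ (x + t • v) = b} := by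
      rintro p ⟨b, hbQ, hb⟩
      refine ⟨b, hbQ, ?_⟩
      rw [dotProduct_add, dotProduct_smul, smul_eq_mul,
        hperp p ⟨b, hbQ, hb⟩, mul_zero, add_zero]
      exact hb
    have hnew : qm.1 ⬝ᵥ (x + t • v) = qm.2 := by
      rw [dotProduct_add, dotProduct_smul, smul_eq_mul, htdef, hqm, hρ]
      rw [div_mul_cancel₀ _ (ne_of_gt hqmv)]
      ring
    have hnotin : qm.1 ∉ Submodule.span ℝ {p : Fin n → ℝ | ∃ b, (p, b) ∈ Q ∧ p ⬝ᵥ x = b} := by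
      intro hmem
      have hker : Submodule.span ℝ {p : Fin n → ℝ | ∃ b, (p, b) ∈ Q ∧ p ⬝ᵥ x = b} ≤
          LinearMap.ker (dotLin v) := by
        apply Submodule.span_le.2
        intro p hp
        rw [SetLike.mem_coe, LinearMap.mem_ker, dotLin_apply]
        exact hperp p hp
      have := hker hmem
      rw [LinearMap.mem_ker, dotLin_apply] at this
      exact (ne_of_gt hqmv) this
    rw [SetLike.lt_iff_le_and_exists]
    exact ⟨Submodule.span_mono hsub, qm.1,
      Submodule.subset_span ⟨qm.2, hqmQ, hnew⟩, hnotin⟩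

lemma hull_lemma {n : ℕ} (Q : Set ((Fin n → ℝ) × ℝ)) (hQ : Q.Finite)
    (hcube : ∀ i : Fin n, ((Pi.single i 1 : Fin n → ℝ), (1 : ℝ)) ∈ Q ∧
      ((-Pi.single i 1 : Fin n → ℝ), (0 : ℝ)) ∈ Q)
    (E : Set (Fin n → ℝ))
    (hE : ∀ y : Fin n → ℝ,
      Submodule.span ℝ {p : Fin n → ℝ | ∃ b, (p, b) ∈ Q ∧ p ⬝ᵥ y = b} = ⊤ → y ∈ E)
    {x : Fin n → ℝ} (hx : ∀ q ∈ Q, q.1 ⬝ᵥ x ≤ q.2) :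
    x ∈ convexHull ℝ (E ∩ {y | ∀ q ∈ Q, q.1 ⬝ᵥ y ≤ q.2}) := by
  classical
  suffices h : ∀ (m : ℕ) (y : Fin n → ℝ), (∀ q ∈ Q, q.1 ⬝ᵥ y ≤ q.2) →
      n ≤ m + Module.finrank ℝ
        (Submodule.span ℝ {p : Fin n → ℝ | ∃ b, (p, b) ∈ Q ∧ p ⬝ᵥ y = b}) →
      y ∈ convexHull ℝ (E ∩ {y | ∀ q ∈ Q, q.1 ⬝ᵥ y ≤ q.2}) by
    exact h n x hx (Nat.le_add_right n _)
  intro m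
  induction m with
  | zero =>
      intro y hy hrank
      have htop : Submodule.span ℝ {p : Fin n → ℝ | ∃ b, (p, b) ∈ Q ∧ p ⬝ᵥ y = b} = ⊤ := by
        apply Submodule.eq_top_of_finrank_eq
        have hle : Module.finrank ℝ
            (Submodule.span ℝ {p : Fin n → ℝ | ∃ b, (p, b) ∈ Q ∧ p ⬝ᵥ y = b}) ≤
            Module.finrank ℝ (Fin n → ℝ) := Submodule.finrank_le _
        rw [Module.finrank_fin_fun] at hle ⊢
        omega
      exact subset_convexHull ℝ _ ⟨hE y htop, hy⟩
  | succ m ih =>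
      intro y hy hrank
      by_cases htop : Submodule.span ℝ {p : Fin n → ℝ | ∃ b, (p, b) ∈ Q ∧ p ⬝ᵥ y = b} = ⊤
      · exact subset_convexHull ℝ _ ⟨hE y htop, hy⟩
      · obtain ⟨v, hv0, hvperp⟩ := exists_perp _ htop
        obtain ⟨t1, ht1, hy1, hlt1⟩ := hull_move Q hQ hcube hy hv0 hvperp
        obtain ⟨t2, ht2, hy2, hlt2⟩ := hull_move Q hQ hcube hy (neg_ne_zero.2 hv0)
          (fun p hp => by rw [dotProduct_neg, hvperp p hp, neg_zero])
        have hr1 := Submodule.finrank_lt_finrank_of_lt hlt1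
        have hr2 := Submodule.finrank_lt_finrank_of_lt hlt2
        have h1 := ih _ hy1 (by omega)
        have h2 := ih _ hy2 (by omega)
        have hsum : t2 / (t1 + t2) + t1 / (t1 + t2) = 1 := by
          field_simp
          ring
        have hcomb : y = (t2 / (t1 + t2)) • (y + t1 • v) +
            (t1 / (t1 + t2)) • (y + t2 • (-v)) := by
          funext j
          simp only [Pi.add_apply, Pi.smul_apply, Pi.neg_apply, smul_eq_mul]
          field_simp
          ring
        rw [hcomb]
        exact (convex_convexHull ℝ _) h1 h2
          (div_nonneg ht2.le (by linarith)) (div_nonneg ht1.le (by linarith)) hsum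
end SSaux
namespace SSaux

open Matrix

lemma selection {n k : ℕ} {f : Cube n → ℝ} (hfc : Continuous f)
    (c : Fin k → ℝ) (a : Fin k → Fin n → ℝ)
    {U : Set (Fin n → ℝ)} (hUc : U ⊆ Cube n) (hconv : Convex ℝ U)
    {z : Fin n → ℝ} (hzU : z ∈ U)
    (hsel : ∀ y (hy : y ∈ U), ∃ j, f ⟨y, hUc hy⟩ = c j + (a j) ⬝ᵥ y)
    (hdi : ∀ j j', (∀ y ∈ U, c j + (a j) ⬝ᵥ y = c j' + (a j') ⬝ᵥ y)
          ∨ (∀ y ∈ U, c j + (a j) ⬝ᵥ y ≠ c j' + (a j') ⬝ᵥ y)) :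
    ∃ j, ∀ y (hy : y ∈ U), f ⟨y, hUc hy⟩ = c j + (a j) ⬝ᵥ y := by
  classical
  set zc : (Cube n : Set (Fin n → ℝ)) := ⟨z, hUc hzU⟩ with hzc
  obtain ⟨j0, hj0⟩ := hsel z hzU
  set S : Set (Fin k) := {j | c j + (a j) ⬝ᵥ z = f zc} with hS
  have hj0S : j0 ∈ S := hj0.symm
  set T : Fin k → Set (Cube n) :=
    fun j => {p | f p = c j + (a j) ⬝ᵥ (p : Fin n → ℝ)} with hT
  have hTclosed : ∀ j, IsClosed (T j) := by
    intro j
    apply isClosed_eq hfc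
    apply Continuous.add continuous_const
    unfold dotProduct
    apply continuous_finset_sum
    intro i _
    exact Continuous.mul continuous_const ((continuous_apply i).comp continuous_subtype_val)
  set A : Set (Cube n) := ⋃ j ∈ S, T j with hA
  set B : Set (Cube n) := ⋃ j ∈ Sᶜ, T j with hB
  have hAclosed : IsClosed A := (Set.toFinite S).isClosed_biUnion (fun j _ => hTclosed j)
  have hBclosed : IsClosed B := (Set.toFinite Sᶜ).isClosed_biUnion (fun j _ => hTclosed j)
  set U' : Set (Cube n) := Subtype.val ⁻¹' U with hU'
  have hzcU' : zc ∈ U' := hzU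
  have hU'pre : IsPreconnected U' := by
    have h2 : Subtype.val '' U' = U := by
      ext w
      constructor
      · rintro ⟨p, hpU, rfl⟩; exact hpU
      · intro hw; exact ⟨⟨w, hUc hw⟩, hw, rfl⟩
    exact (Topology.IsInducing.subtypeVal.isPreconnected_image).1
      (h2 ▸ hconv.isPreconnected)
  have hdisj : ∀ p ∈ U', p ∈ A → p ∈ B → False := by
    intro p hpU' hpA hpB
    obtain ⟨j, hjS, hpj⟩ := Set.mem_iUnion₂.1 hpA
    obtain ⟨j', hj'S, hpj'⟩ := Set.mem_iUnion₂.1 hpB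
    rcases hdi j' j with heq | hne
    · apply hj'S
      show c j' + (a j') ⬝ᵥ z = f zc
      rw [heq z hzU]
      exact hjS
    · exact hne (p : Fin n → ℝ) hpU' (by rw [← hpj', ← hpj])
  have hcover : U' ⊆ A ∪ B := by
    intro p hp
    obtain ⟨j, hj⟩ := hsel (p : Fin n → ℝ) hp
    have hj2 : p ∈ T j := by
      rw [hT]
      show f p = c j + (a j) ⬝ᵥ (p : Fin n → ℝ)
      convert hj using 2
    by_cases hjS : j ∈ S
    · exact Or.inl (Set.mem_biUnion hjS hj2)
    · exact Or.inr (Set.mem_biUnion hjS hj2)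
  have hzcA : zc ∈ A := Set.mem_biUnion hj0S (by exact hj0)
  have hUA : ∀ p ∈ U', p ∈ A := by
    by_contra hcon
    push_neg at hcon
    obtain ⟨w, hwU', hwA⟩ := hcon
    have hne := hU'pre Bᶜ Aᶜ hBclosed.isOpen_compl hAclosed.isOpen_compl
      (fun p hp => by
        by_cases hpB : p ∈ B
        · exact Or.inr (fun hpA => hdisj p hp hpA hpB)
        · exact Or.inl hpB)
      ⟨zc, hzcU', fun hB => hdisj zc hzcU' hzcA hB⟩
      ⟨w, hwU', hwA⟩
    obtain ⟨p, hpU', hpB, hpA⟩ := hne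
    rcases hcover hpU' with h | h
    · exact hpA h
    · exact hpB h
  refine ⟨j0, ?_⟩
  intro y hy
  have hyA := hUA ⟨y, hUc hy⟩ hy
  obtain ⟨j, hjS, hpj⟩ := Set.mem_iUnion₂.1 hyA
  have hpj2 : f ⟨y, hUc hy⟩ = c j + (a j) ⬝ᵥ y := hpj
  rcases hdi j j0 with heq | hne
  · rw [hpj2, heq y hy]
  · exfalso
    apply hne z hzU
    show c j + (a j) ⬝ᵥ z = c j0 + (a j0) ⬝ᵥ z
    have h1 : c j + (a j) ⬝ᵥ z = f zc := hjS
    have h2 : c j0 + (a j0) ⬝ᵥ z = f zc := hj0S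
    rw [h1, h2]

end SSaux
namespace SSaux

open Matrix

lemma piece_on_closure {n : ℕ} {f : Cube n → ℝ} (hfc : Continuous f)
    {Q : Set ((Fin n → ℝ) × ℝ)}
    {z : Fin n → ℝ} (hz : ∀ q ∈ Q, q.1 ⬝ᵥ z < q.2)
    (hCc : ∀ y : Fin n → ℝ, (∀ q ∈ Q, q.1 ⬝ᵥ y ≤ q.2) → y ∈ Cube n)
    {cj : ℝ} {aj : Fin n → ℝ}
    (hO : ∀ p : Cube n, (∀ q ∈ Q, q.1 ⬝ᵥ (p : Fin n → ℝ) < q.2) →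
      f p = cj + aj ⬝ᵥ (p : Fin n → ℝ)) :
    ∀ p : Cube n, (∀ q ∈ Q, q.1 ⬝ᵥ (p : Fin n → ℝ) ≤ q.2) →
      f p = cj + aj ⬝ᵥ (p : Fin n → ℝ) := by
  intro p hp
  set y := (p : Fin n → ℝ) with hy
  set u : ℕ → Fin n → ℝ := fun m => y + (1 / (m + 1 : ℝ)) • (z - y) with hu
  have huO : ∀ m, ∀ q ∈ Q, q.1 ⬝ᵥ u m < q.2 := by
    intro m q hq
    have hc1 : 0 < 1 / (m + 1 : ℝ) := by positivity
    have hc2 : 1 / (m + 1 : ℝ) ≤ 1 := by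
      rw [div_le_one (by positivity)]
      linarith [Nat.cast_nonneg (α := ℝ) m]
    rw [hu]
    simp only
    rw [dotProduct_add, dotProduct_smul, smul_eq_mul, dotProduct_sub]
    have h1 := hp q hq
    have h2 := hz q hq
    nlinarith
  have hucube : ∀ m, u m ∈ Cube n := fun m => hCc _ (fun q hq => (huO m q hq).le)
  have hulim : Filter.Tendsto u Filter.atTop (nhds y) := by
    have h0 : Filter.Tendsto (fun m : ℕ => 1 / (m + 1 : ℝ)) Filter.atTop (nhds 0) :=
      tendsto_one_div_add_atTop_nhds_zero_nat
    have h1 : Filter.Tendsto (fun m : ℕ => y + (1 / (m + 1 : ℝ)) • (z - y))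
        Filter.atTop (nhds (y + (0 : ℝ) • (z - y))) :=
      Filter.Tendsto.const_add _ (h0.smul_const _)
    have h2 : y + (0 : ℝ) • (z - y) = y := by simp
    rw [h2] at h1
    exact h1
  have hlim1 : Filter.Tendsto (fun m => f ⟨u m, hucube m⟩) Filter.atTop (nhds (f p)) := by
    apply (hfc.tendsto p).comp
    rw [tendsto_subtype_rng]
    exact hulim
  have hlim2 : Filter.Tendsto (fun m => f ⟨u m, hucube m⟩) Filter.atTop
      (nhds (cj + aj ⬝ᵥ y)) := by
    have heq : (fun m => f ⟨u m, hucube m⟩) = fun m => cj + aj ⬝ᵥ u m := by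
      funext m
      exact hO ⟨u m, hucube m⟩ (huO m)
    rw [heq]
    have hcont : Continuous (fun v : Fin n → ℝ => cj + aj ⬝ᵥ v) := by
      apply continuous_const.add
      unfold dotProduct
      exact continuous_finset_sum _ (fun i _ => continuous_const.mul (continuous_apply i))
    exact (hcont.tendsto y).comp hulim
  exact tendsto_nhds_unique hlim1 hlim2

lemma exists_cell {n kf kg : ℕ} {f g : Cube n → ℝ}
    (hfc : Continuous f) (hgc : Continuous g)
    (cf : Fin kf → ℝ) (af : Fin kf → Fin n → ℝ)
    (cg : Fin kg → ℝ) (ag : Fin kg → Fin n → ℝ)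
    (hfp : ∀ p : Cube n, ∃ j, f p = cf j + af j ⬝ᵥ (p : Fin n → ℝ))
    (hgp : ∀ p : Cube n, ∃ j, g p = cg j + ag j ⬝ᵥ (p : Fin n → ℝ))
    (pool : Set ((Fin n → ℝ) × ℝ)) (hpoolfin : pool.Finite)
    (hpool0 : ∀ q ∈ pool, q.1 ≠ 0)
    (hrowC : ∀ i : Fin n, ((Pi.single i 1 : Fin n → ℝ), (1 : ℝ)) ∈ pool ∧
      ((-Pi.single i 1 : Fin n → ℝ), (0 : ℝ)) ∈ pool)
    (hrowF : ∀ j j' : Fin kf, af j ≠ af j' → (af j - af j', cf j' - cf j) ∈ pool)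
    (hrowG : ∀ j j' : Fin kg, ag j ≠ ag j' → (ag j - ag j', cg j' - cg j) ∈ pool)
    (x : Cube n) :
    ∃ Q : Set ((Fin n → ℝ) × ℝ), Q ⊆ pool ∧
      (∀ i : Fin n, ((Pi.single i 1 : Fin n → ℝ), (1 : ℝ)) ∈ Q ∧
        ((-Pi.single i 1 : Fin n → ℝ), (0 : ℝ)) ∈ Q) ∧
      (∀ q ∈ Q, q.1 ⬝ᵥ (x : Fin n → ℝ) ≤ q.2) ∧
      (∀ y : Fin n → ℝ, (∀ q ∈ Q, q.1 ⬝ᵥ y ≤ q.2) → y ∈ Cube n) ∧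
      ∃ jf jg, ∀ p : Cube n, (∀ q ∈ Q, q.1 ⬝ᵥ (p : Fin n → ℝ) ≤ q.2) →
        f p = cf jf + af jf ⬝ᵥ (p : Fin n → ℝ) ∧
        g p = cg jg + ag jg ⬝ᵥ (p : Fin n → ℝ) := by
  classical
  set xv : Fin n → ℝ := (x : Fin n → ℝ) with hxv
  have hxcube : ∀ i, 0 ≤ xv i ∧ xv i ≤ 1 := x.2
  -- generic direction
  obtain ⟨v, hv⟩ : ∃ v : Fin n → ℝ, ∀ a ∈ Prod.fst '' pool, a ⬝ᵥ v ≠ 0 := by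
    apply exists_generic_vec _ (hpoolfin.image _)
    rintro a ⟨q, hq, rfl⟩
    exact hpool0 q hq
  have hvne : ∀ q ∈ pool, q.1 ⬝ᵥ v ≠ 0 := fun q hq => hv q.1 ⟨q, hq, rfl⟩
  -- choose the step s for the direction  w = (ctr - x) + s • v
  set ctr : Fin n → ℝ := fun _ => (1 / 2 : ℝ) with hctr
  have hsexists : ∃ s : ℝ, 0 < s ∧ (∀ i : Fin n, s * |v i| < 1 / 2) ∧
      ∀ q ∈ pool, q.1 ⬝ᵥ (ctr - xv) + s * (q.1 ⬝ᵥ v) ≠ 0 := by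
    set sbound : Finset ℝ :=
      insert 1 (Finset.univ.image (fun i : Fin n => 1 / (2 * (|v i| + 1)))) with hsbound
    have hsbpos : ∀ b ∈ sbound, 0 < b := by
      intro b hb
      rw [hsbound, Finset.mem_insert] at hb
      rcases hb with rfl | hb
      · norm_num
      · obtain ⟨i, _, rfl⟩ := Finset.mem_image.1 hb
        positivity
    have hsne : sbound.Nonempty := ⟨1, Finset.mem_insert_self 1 _⟩
    set smax : ℝ := sbound.min' hsne with hsmax
    have hsmaxpos : 0 < smax := hsbpos _ (sbound.min'_mem hsne)
    have hroots : (⋃ q ∈ pool, {s : ℝ | q.1 ⬝ᵥ (ctr - xv) + s * (q.1 ⬝ᵥ v) = 0}).Finite := by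
      apply hpoolfin.biUnion
      intro q hq
      apply Set.Subsingleton.finite
      intro s1 hs1 s2 hs2
      simp only [Set.mem_setOf_eq] at hs1 hs2
      have hβ := hvne q hq
      have : s1 * (q.1 ⬝ᵥ v) = s2 * (q.1 ⬝ᵥ v) := by linarith
      exact mul_right_cancel₀ hβ this
    obtain ⟨s, hsIoo, hsroot⟩ :=
      (Set.Ioo_infinite hsmaxpos (a := 0)).exists_notMem_finite hroots
    obtain ⟨hs0, hssmax⟩ := hsIoo
    refine ⟨s, hs0, ?_, ?_⟩
    · intro i
      have hb : (1 : ℝ) / (2 * (|v i| + 1)) ∈ sbound := by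
        rw [hsbound]
        exact Finset.mem_insert_of_mem (Finset.mem_image_of_mem _ (Finset.mem_univ i))
      have h1 : s < 1 / (2 * (|v i| + 1)) := lt_of_lt_of_le hssmax (Finset.min'_le _ _ hb)
      have h2 : 0 ≤ |v i| := abs_nonneg _
      rw [lt_div_iff₀ (by positivity)] at h1
      nlinarith
    · intro q hq hzero
      exact hsroot (Set.mem_biUnion hq hzero)
  obtain ⟨s, hs0, hsvi, hsroot⟩ := hsexists
  set w : Fin n → ℝ := (ctr - xv) + s • v with hw
  -- slopes along w are nonzero
  have hβ : ∀ q ∈ pool, q.1 ⬝ᵥ w ≠ 0 := by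
    intro q hq
    rw [hw, dotProduct_add, dotProduct_smul, smul_eq_mul]
    exact hsroot q hq
  -- coordinate signs of w at the boundary
  have hwpos : ∀ i, xv i = 0 → 0 < w i := by
    intro i h0
    have := hsvi i
    have habs : s * v i ≥ -(s * |v i|) := by
      have := neg_abs_le (v i)
      nlinarith
    simp only [hw, hctr, Pi.add_apply, Pi.sub_apply, Pi.smul_apply, smul_eq_mul, h0]
    nlinarith
  have hwneg : ∀ i, xv i = 1 → w i < 0 := by
    intro i h1
    have := hsvi i
    have habs : s * v i ≤ s * |v i| := by
      have := le_abs_self (v i)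
      nlinarith
    simp only [hw, hctr, Pi.add_apply, Pi.sub_apply, Pi.smul_apply, smul_eq_mul, h1]
    nlinarith
  -- choose the step t along w
  have htexists : ∃ t : ℝ, 0 < t ∧
      (∀ q ∈ pool, q.1 ⬝ᵥ xv - q.2 ≠ 0 → t * |q.1 ⬝ᵥ w| < |q.1 ⬝ᵥ xv - q.2|) ∧
      (∀ i : Fin n, t * (|w i| + 1) <
        (if xv i = 0 ∨ xv i = 1 then 1 else min (xv i) (1 - xv i))) := by
    set B1 : Finset ℝ := (hpoolfin.toFinset.filter (fun q => q.1 ⬝ᵥ xv - q.2 ≠ 0)).image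
      (fun q => |q.1 ⬝ᵥ xv - q.2| / |q.1 ⬝ᵥ w|) with hB1
    set B2 : Finset ℝ := Finset.univ.image
      (fun i : Fin n =>
        (if xv i = 0 ∨ xv i = 1 then 1 else min (xv i) (1 - xv i)) / (|w i| + 1)) with hB2
    set allB : Finset ℝ := insert 1 (B1 ∪ B2) with hallB
    have hallBpos : ∀ b ∈ allB, 0 < b := by
      intro b hb
      rw [hallB, Finset.mem_insert] at hb
      rcases hb with rfl | hb
      · norm_num
      rcases Finset.mem_union.1 hb with hb | hb
      · obtain ⟨q, hq, rfl⟩ := Finset.mem_image.1 hb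
        rw [Finset.mem_filter, Set.Finite.mem_toFinset] at hq
        have h1 : q.1 ⬝ᵥ w ≠ 0 := hβ q hq.1
        have h2 : q.1 ⬝ᵥ xv - q.2 ≠ 0 := hq.2
        apply div_pos (abs_pos.2 h2) (abs_pos.2 h1)
      · obtain ⟨i, _, rfl⟩ := Finset.mem_image.1 hb
        apply div_pos _ (by positivity)
        by_cases h01 : xv i = 0 ∨ xv i = 1
        · rw [if_pos h01]; norm_num
        · rw [if_neg h01]
          push_neg at h01
          rcases hxcube i with ⟨hl, hr⟩
          apply lt_min
          · exact lt_of_le_of_ne hl (Ne.symm h01.1)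
          · have : xv i < 1 := lt_of_le_of_ne hr h01.2
            linarith
    have hne : allB.Nonempty := ⟨1, Finset.mem_insert_self 1 _⟩
    refine ⟨allB.min' hne / 2, ?_, ?_, ?_⟩
    · have := hallBpos _ (allB.min'_mem hne)
      linarith
    · intro q hq hgap
      have hb : |q.1 ⬝ᵥ xv - q.2| / |q.1 ⬝ᵥ w| ∈ allB := by
        rw [hallB]
        apply Finset.mem_insert_of_mem
        apply Finset.mem_union_left
        rw [hB1]
        apply Finset.mem_image_of_mem
        rw [Finset.mem_filter, Set.Finite.mem_toFinset]
        exact ⟨hq, hgap⟩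
      have h1 : allB.min' hne / 2 < |q.1 ⬝ᵥ xv - q.2| / |q.1 ⬝ᵥ w| := by
        have h2 := Finset.min'_le _ _ hb
        have h3 := hallBpos _ (allB.min'_mem hne)
        linarith
      have h4 : (0 : ℝ) < |q.1 ⬝ᵥ w| := abs_pos.2 (hβ q hq)
      calc allB.min' hne / 2 * |q.1 ⬝ᵥ w| < |q.1 ⬝ᵥ xv - q.2| / |q.1 ⬝ᵥ w| * |q.1 ⬝ᵥ w| := by
            apply mul_lt_mul_of_pos_right _ h4
            have h2 := Finset.min'_le _ _ hb
            have h3 := hallBpos _ (allB.min'_mem hne)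
            linarith
        _ = |q.1 ⬝ᵥ xv - q.2| := div_mul_cancel₀ _ (ne_of_gt h4)
    · intro i
      have hb : (if xv i = 0 ∨ xv i = 1 then 1 else min (xv i) (1 - xv i)) / (|w i| + 1)
          ∈ allB := by
        rw [hallB]
        apply Finset.mem_insert_of_mem
        apply Finset.mem_union_right
        rw [hB2]
        exact Finset.mem_image_of_mem _ (Finset.mem_univ i)
      have h4 : (0 : ℝ) < |w i| + 1 := by positivity
      have h1 : allB.min' hne / 2 <
          (if xv i = 0 ∨ xv i = 1 then 1 else min (xv i) (1 - xv i)) / (|w i| + 1) := by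
        have h2 := Finset.min'_le _ _ hb
        have h3 := hallBpos _ (allB.min'_mem hne)
        linarith
      calc allB.min' hne / 2 * (|w i| + 1) <
          (if xv i = 0 ∨ xv i = 1 then 1 else min (xv i) (1 - xv i)) / (|w i| + 1)
            * (|w i| + 1) := by
            apply mul_lt_mul_of_pos_right _ h4
            have h2 := Finset.min'_le _ _ hb
            have h3 := hallBpos _ (allB.min'_mem hne)
            linarith
        _ = _ := div_mul_cancel₀ _ (ne_of_gt h4)
  obtain ⟨t, ht0, htgap, hti⟩ := htexists
  set z : Fin n → ℝ := xv + t • w with hz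
  -- z is in the open cube
  have hzint : ∀ i, 0 < z i ∧ z i < 1 := by
    intro i
    have hi := hti i
    have habs1 : t * w i ≤ t * |w i| := by
      have := le_abs_self (w i)
      nlinarith
    have habs2 : -(t * |w i|) ≤ t * w i := by
      have := neg_abs_le (w i)
      nlinarith
    have hzi : z i = xv i + t * w i := by
      simp [hz, Pi.add_apply, Pi.smul_apply, smul_eq_mul]
    by_cases h0 : xv i = 0
    · rw [if_pos (Or.inl h0)] at hi
      have hw0 := hwpos i h0
      constructor
      · rw [hzi, h0]; positivity
      · rw [hzi, h0]; nlinarith [abs_nonneg (w i)]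
    · by_cases h1 : xv i = 1
      · rw [if_pos (Or.inr h1)] at hi
        have hw1 := hwneg i h1
        constructor
        · rw [hzi, h1]; nlinarith [abs_nonneg (w i)]
        · rw [hzi, h1]; nlinarith
      · rw [if_neg (by tauto)] at hi
        rcases hxcube i with ⟨hl, hr⟩
        have hl' : 0 < xv i := lt_of_le_of_ne hl (Ne.symm h0)
        have hr' : xv i < 1 := lt_of_le_of_ne hr h1
        have hmin1 : min (xv i) (1 - xv i) ≤ xv i := min_le_left _ _
        have hmin2 : min (xv i) (1 - xv i) ≤ 1 - xv i := min_le_right _ _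
        constructor
        · rw [hzi]; nlinarith [abs_nonneg (w i)]
        · rw [hzi]; nlinarith [abs_nonneg (w i)]
  -- dot products at z
  have hzdot : ∀ q ∈ pool, q.1 ⬝ᵥ z = (q.1 ⬝ᵥ xv) + t * (q.1 ⬝ᵥ w) := by
    intro q hq
    rw [hz, dotProduct_add, dotProduct_smul, smul_eq_mul]
  have hzne : ∀ q ∈ pool, q.1 ⬝ᵥ z ≠ q.2 := by
    intro q hq heq
    rw [hzdot q hq] at heq
    by_cases hgap : q.1 ⬝ᵥ xv - q.2 = 0
    · have : t * (q.1 ⬝ᵥ w) = 0 := by linarith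
      rcases mul_eq_zero.1 this with h | h
      · exact absurd h (ne_of_gt ht0)
      · exact hβ q hq h
    · have h1 := htgap q hq hgap
      have h2 : t * (q.1 ⬝ᵥ w) ≤ t * |q.1 ⬝ᵥ w| := by
        have := le_abs_self (q.1 ⬝ᵥ w)
        nlinarith
      have h3 : -(t * |q.1 ⬝ᵥ w|) ≤ t * (q.1 ⬝ᵥ w) := by
        have := neg_abs_le (q.1 ⬝ᵥ w)
        nlinarith
      rcases abs_cases (q.1 ⬝ᵥ xv - q.2) with ⟨ha, _⟩ | ⟨ha, _⟩ <;> nlinarith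
  have hzsign : ∀ q ∈ pool, q.1 ⬝ᵥ z < q.2 → q.1 ⬝ᵥ xv ≤ q.2 := by
    intro q hq hlt
    by_contra hgt
    push_neg at hgt
    have hgap : q.1 ⬝ᵥ xv - q.2 ≠ 0 := by linarith
    have h1 := htgap q hq hgap
    have h3 : -(t * |q.1 ⬝ᵥ w|) ≤ t * (q.1 ⬝ᵥ w) := by
      have := neg_abs_le (q.1 ⬝ᵥ w)
      nlinarith
    rw [hzdot q hq] at hlt
    rcases abs_cases (q.1 ⬝ᵥ xv - q.2) with ⟨ha, _⟩ | ⟨ha, _⟩ <;> nlinarith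
  -- the cell
  set Q : Set ((Fin n → ℝ) × ℝ) := {q ∈ pool | q.1 ⬝ᵥ z < q.2} with hQdef
  have hQsub : Q ⊆ pool := Set.sep_subset _ _
  have hQrowC : ∀ i : Fin n, ((Pi.single i 1 : Fin n → ℝ), (1 : ℝ)) ∈ Q ∧
      ((-Pi.single i 1 : Fin n → ℝ), (0 : ℝ)) ∈ Q := by
    intro i
    constructor
    · refine ⟨(hrowC i).1, ?_⟩
      show (Pi.single i 1 : Fin n → ℝ) ⬝ᵥ z < 1
      rw [single_dotProduct, one_mul]
      exact (hzint i).2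
    · refine ⟨(hrowC i).2, ?_⟩
      show (-Pi.single i 1 : Fin n → ℝ) ⬝ᵥ z < 0
      rw [neg_dotProduct, single_dotProduct, one_mul]
      linarith [(hzint i).1]
  have hxQ : ∀ q ∈ Q, q.1 ⬝ᵥ xv ≤ q.2 := by
    rintro q ⟨hq, hqz⟩
    exact hzsign q hq hqz
  have hCc : ∀ y : Fin n → ℝ, (∀ q ∈ Q, q.1 ⬝ᵥ y ≤ q.2) → y ∈ Cube n := by
    intro y hy i
    have h1 : (Pi.single i 1 : Fin n → ℝ) ⬝ᵥ y ≤ 1 := hy _ (hQrowC i).1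
    have h2 : (-Pi.single i 1 : Fin n → ℝ) ⬝ᵥ y ≤ 0 := hy _ (hQrowC i).2
    rw [single_dotProduct, one_mul] at h1
    rw [neg_dotProduct, single_dotProduct, one_mul] at h2
    constructor <;> linarith
  have hzQ : ∀ q ∈ Q, q.1 ⬝ᵥ z < q.2 := by
    rintro q ⟨_, hqz⟩
    exact hqz
  -- the open cell
  set O : Set (Fin n → ℝ) := {y | ∀ q ∈ Q, q.1 ⬝ᵥ y < q.2} with hO
  have hOC : ∀ y ∈ O, ∀ q ∈ Q, q.1 ⬝ᵥ y ≤ q.2 := fun y hy q hq => (hy q hq).le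
  have hOcube : O ⊆ Cube n := fun y hy => hCc y (hOC y hy)
  have hOconv : Convex ℝ O := by
    intro y1 hy1 y2 hy2 a b ha hb hab
    intro q hq
    rw [dotProduct_add, dotProduct_smul, dotProduct_smul,
      smul_eq_mul, smul_eq_mul]
    rcases eq_or_lt_of_le ha with rfl | ha'
    · have hb1 : b = 1 := by linarith
      rw [hb1]
      have := hy2 q hq
      simp only [zero_mul, one_mul, zero_add]
      exact this
    · have e1 : a * (q.1 ⬝ᵥ y1) < a * q.2 := mul_lt_mul_of_pos_left (hy1 q hq) ha'
      have e2 : b * (q.1 ⬝ᵥ y2) ≤ b * q.2 := mul_le_mul_of_nonneg_left (hy2 q hq).le hb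
      have e3 : a * q.2 + b * q.2 = q.2 := by rw [← add_mul, hab, one_mul]
      linarith
  have hzO : z ∈ O := hzQ
  -- dichotomy for the f-pieces
  have hdif : ∀ j j' : Fin kf, (∀ y ∈ O, cf j + af j ⬝ᵥ y = cf j' + af j' ⬝ᵥ y)
      ∨ (∀ y ∈ O, cf j + af j ⬝ᵥ y ≠ cf j' + af j' ⬝ᵥ y) := by
    intro j j'
    by_cases haf : af j = af j'
    · by_cases hcf : cf j = cf j'
      · left; intro y _; rw [haf, hcf]
      · right; intro y _ heq; rw [haf] at heq; exact hcf (by linarith)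
    · have hrow := hrowF j j' haf
      have hrow' := hrowF j' j (Ne.symm haf)
      rcases lt_or_gt_of_ne (hzne _ hrow) with hlt | hgt
      · right
        intro y hyO heq
        have h1 : (af j - af j', cf j' - cf j) ∈ Q := ⟨hrow, hlt⟩
        have h2 := hyO _ h1
        simp only at h2
        rw [sub_dotProduct] at h2
        linarith
      · right
        intro y hyO heq
        have hlt' : (af j' - af j) ⬝ᵥ z < cf j - cf j' := by
          have := hgt
          simp only at this
          rw [sub_dotProduct] at this ⊢
          linarith
        have h1 : (af j' - af j, cf j - cf j') ∈ Q := ⟨hrow', hlt'⟩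
        have h2 := hyO _ h1
        simp only at h2
        rw [sub_dotProduct] at h2
        linarith
  have hdig : ∀ j j' : Fin kg, (∀ y ∈ O, cg j + ag j ⬝ᵥ y = cg j' + ag j' ⬝ᵥ y)
      ∨ (∀ y ∈ O, cg j + ag j ⬝ᵥ y ≠ cg j' + ag j' ⬝ᵥ y) := by
    intro j j'
    by_cases hag : ag j = ag j'
    · by_cases hcg : cg j = cg j'
      · left; intro y _; rw [hag, hcg]
      · right; intro y _ heq; rw [hag] at heq; exact hcg (by linarith)
    · have hrow := hrowG j j' hag
      have hrow' := hrowG j' j (Ne.symm hag)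
      rcases lt_or_gt_of_ne (hzne _ hrow) with hlt | hgt
      · right
        intro y hyO heq
        have h1 : (ag j - ag j', cg j' - cg j) ∈ Q := ⟨hrow, hlt⟩
        have h2 := hyO _ h1
        simp only at h2
        rw [sub_dotProduct] at h2
        linarith
      · right
        intro y hyO heq
        have hlt' : (ag j' - ag j) ⬝ᵥ z < cg j - cg j' := by
          have := hgt
          simp only at this
          rw [sub_dotProduct] at this ⊢
          linarith
        have h1 : (ag j' - ag j, cg j - cg j') ∈ Q := ⟨hrow', hlt'⟩
        have h2 := hyO _ h1
        simp only at h2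
        rw [sub_dotProduct] at h2
        linarith
  -- selection on the open cell
  obtain ⟨jf, hjf⟩ := selection hfc cf af hOcube hOconv hzO
    (fun y hy => hfp ⟨y, hOcube hy⟩) hdif
  obtain ⟨jg, hjg⟩ := selection hgc cg ag hOcube hOconv hzO
    (fun y hy => hgp ⟨y, hOcube hy⟩) hdig
  -- extension to the closed cell
  have hfC := piece_on_closure hfc hzQ hCc
    (fun p hp => by
      have := hjf (p : Fin n → ℝ) hp
      simpa using this)
  have hgC := piece_on_closure hgc hzQ hCc
    (fun p hp => by
      have := hjg (p : Fin n → ℝ) hp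
      simpa using this)
  exact ⟨Q, hQsub, hQrowC, hxQ, hCc, jf, jg, fun p hp => ⟨hfC p hp, hgC p hp⟩⟩

end SSaux
namespace SSaux

open Matrix

def dotR {n : ℕ} (a : Fin n → ℝ) : (Fin n → ℝ) →ₗ[ℝ] ℝ where
  toFun y := a ⬝ᵥ y
  map_add' y z := dotProduct_add a y z
  map_smul' c y := by simp [dotProduct_smul, smul_eq_mul]

@[simp] lemma dotR_apply {n : ℕ} (a y : Fin n → ℝ) : dotR a y = a ⬝ᵥ y := rfl

lemma affine_sum {n : ℕ} {ι : Type*} (T : Finset ι) (wgt : ι → ℝ) (pt : ι → Fin n → ℝ)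
    (hw1 : ∑ i ∈ T, wgt i = 1) (c : ℝ) (a : Fin n → ℝ) :
    c + a ⬝ᵥ (∑ i ∈ T, wgt i • pt i) = ∑ i ∈ T, wgt i * (c + a ⬝ᵥ pt i) := by
  have h1 : a ⬝ᵥ (∑ i ∈ T, wgt i • pt i) = ∑ i ∈ T, wgt i * (a ⬝ᵥ pt i) := by
    have h2 := map_sum (dotR a) (fun i => wgt i • pt i) T
    rw [show a ⬝ᵥ (∑ i ∈ T, wgt i • pt i) = dotR a (∑ i ∈ T, wgt i • pt i) from rfl, h2]
    apply Finset.sum_congr rfl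
    intro i _
    rw [LinearMap.map_smul, dotR_apply, smul_eq_mul]
  calc c + a ⬝ᵥ (∑ i ∈ T, wgt i • pt i)
      = (∑ i ∈ T, wgt i) * c + ∑ i ∈ T, wgt i * (a ⬝ᵥ pt i) := by rw [hw1, h1]; ring
    _ = ∑ i ∈ T, (wgt i * c + wgt i * (a ⬝ᵥ pt i)) := by
        rw [Finset.sum_mul, Finset.sum_add_distrib]
    _ = ∑ i ∈ T, wgt i * (c + a ⬝ᵥ pt i) := by
        apply Finset.sum_congr rfl
        intro i _
        ring

theorem key_lemma {n : ℕ} {f g : Cube n → ℝ} (hf : IsPWLQ f) (hg : IsPWLQ g)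
    (hzero : ∀ x : Cube n, f x = 0 → g x = 0) :
    ∃ k : ℕ, ∀ x : Cube n, g x ≤ (k : ℝ) * f x := by
  classical
  obtain ⟨hfc, hfb, kf, cf0, af0, hfp0⟩ := hf
  obtain ⟨hgc, hgb, kg, cg0, ag0, hgp0⟩ := hg
  set cf : Fin kf → ℝ := fun j => (cf0 j : ℝ) with hcf
  set af : Fin kf → Fin n → ℝ := fun j i => (af0 j i : ℝ) with haf
  set cg : Fin kg → ℝ := fun j => (cg0 j : ℝ) with hcg
  set ag : Fin kg → Fin n → ℝ := fun j i => (ag0 j i : ℝ) with hag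
  have hfp : ∀ p : Cube n, ∃ j, f p = cf j + af j ⬝ᵥ (p : Fin n → ℝ) := fun p => hfp0 p
  have hgp : ∀ p : Cube n, ∃ j, g p = cg j + ag j ⬝ᵥ (p : Fin n → ℝ) := fun p => hgp0 p
  -- the pool of constraints
  set rowF : Fin kf × Fin kf → (Fin n → ℝ) × ℝ :=
    fun pr => (af pr.1 - af pr.2, cf pr.2 - cf pr.1) with hrowFdef
  set rowG : Fin kg × Fin kg → (Fin n → ℝ) × ℝ :=
    fun pr => (ag pr.1 - ag pr.2, cg pr.2 - cg pr.1) with hrowGdef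
  set rowC : Fin n × Bool → (Fin n → ℝ) × ℝ :=
    fun pr => cond pr.2 ((Pi.single pr.1 1 : Fin n → ℝ), (1 : ℝ))
      ((-Pi.single pr.1 1 : Fin n → ℝ), (0 : ℝ)) with hrowCdef
  set pool : Set ((Fin n → ℝ) × ℝ) :=
    {q | (q ∈ Set.range rowF ∨ q ∈ Set.range rowG) ∧ q.1 ≠ 0} ∪ Set.range rowC
    with hpooldef
  have hpoolfin : pool.Finite := by
    apply Set.Finite.union
    · apply Set.Finite.subset ((Set.finite_range rowF).union (Set.finite_range rowG))
      rintro q ⟨hq, _⟩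
      exact hq
    · exact Set.finite_range rowC
  have hsingle_ne : ∀ i : Fin n, (Pi.single i 1 : Fin n → ℝ) ≠ 0 := by
    intro i h
    have h2 := congrFun h i
    rw [Pi.single_eq_same, Pi.zero_apply] at h2
    exact one_ne_zero h2
  have hpool0 : ∀ q ∈ pool, q.1 ≠ 0 := by
    rintro q (⟨_, h0⟩ | ⟨pr, rfl⟩)
    · exact h0
    · rw [hrowCdef]
      cases hb : pr.2
      · simp only [hb, cond_false]
        intro h
        exact hsingle_ne pr.1 (neg_eq_zero.1 h)
      · simp only [hb, cond_true]
        exact hsingle_ne pr.1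
  have hrowCmem : ∀ i : Fin n, ((Pi.single i 1 : Fin n → ℝ), (1 : ℝ)) ∈ pool ∧
      ((-Pi.single i 1 : Fin n → ℝ), (0 : ℝ)) ∈ pool :=
    fun i => ⟨Or.inr ⟨(i, true), rfl⟩, Or.inr ⟨(i, false), rfl⟩⟩
  have hrowFmem : ∀ j j' : Fin kf, af j ≠ af j' → (af j - af j', cf j' - cf j) ∈ pool :=
    fun j j' hne => Or.inl ⟨Or.inl ⟨(j, j'), rfl⟩, sub_ne_zero.2 hne⟩
  have hrowGmem : ∀ j j' : Fin kg, ag j ≠ ag j' → (ag j - ag j', cg j' - cg j) ∈ pool :=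
    fun j j' hne => Or.inl ⟨Or.inr ⟨(j, j'), rfl⟩, sub_ne_zero.2 hne⟩
  -- the finite set of basic points
  set E : Set (Fin n → ℝ) :=
    {y | Submodule.span ℝ {p | ∃ b, (p, b) ∈ pool ∧ p ⬝ᵥ y = b} = ⊤} with hEdef
  have hEfin : E.Finite := basic_points_finite pool hpoolfin
  -- the minimum positive value of f on basic points
  set FF : (Fin n → ℝ) → ℝ := fun y => if hy : y ∈ Cube n then f ⟨y, hy⟩ else 1 with hFF
  have hFFval : ∀ (y) (hy : y ∈ Cube n), FF y = f ⟨y, hy⟩ := by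
    intro y hy
    rw [hFF]
    exact dif_pos hy
  have hδex : ∃ δ : ℝ, 0 < δ ∧
      ∀ y ∈ E, ∀ hy : y ∈ Cube n, f ⟨y, hy⟩ ≠ 0 → δ ≤ f ⟨y, hy⟩ := by
    set Ef : Finset (Fin n → ℝ) :=
      hEfin.toFinset.filter (fun y => FF y ≠ 0 ∧ y ∈ Cube n) with hEf
    by_cases hne : Ef.Nonempty
    · obtain ⟨y0, hy0mem, hy0min⟩ := Finset.exists_min_image Ef FF hne
      rw [hEf, Finset.mem_filter, Set.Finite.mem_toFinset] at hy0mem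
      obtain ⟨hy0E, hy0ne, hy0cube⟩ := hy0mem
      refine ⟨FF y0, ?_, ?_⟩
      · rw [hFFval y0 hy0cube]
        rcases lt_or_eq_of_le (hfb ⟨y0, hy0cube⟩).1 with h | h
        · exact h
        · exfalso
          apply hy0ne
          rw [hFFval y0 hy0cube]
          exact h.symm
      · intro y hyE hy hfy
        have hymem : y ∈ Ef := by
          rw [hEf, Finset.mem_filter, Set.Finite.mem_toFinset]
          exact ⟨hyE, by rw [hFFval y hy]; exact hfy, hy⟩
        have h3 := hy0min y hymem
        rw [hFFval y hy] at h3
        exact h3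
    · refine ⟨1, one_pos, ?_⟩
      intro y hyE hy hfy
      exfalso
      apply hne
      refine ⟨y, ?_⟩
      rw [hEf, Finset.mem_filter, Set.Finite.mem_toFinset]
      exact ⟨hyE, by rw [hFFval y hy]; exact hfy, hy⟩
  obtain ⟨δ, hδ0, hδmin⟩ := hδex
  obtain ⟨k, hk⟩ := exists_nat_ge (1 / δ)
  refine ⟨k, ?_⟩
  intro x
  obtain ⟨Q, hQsub, hQrowC, hxQ, hCc, jf, jg, hpieces⟩ :=
    exists_cell hfc hgc cf af cg ag hfp hgp pool hpoolfin hpool0 hrowCmem hrowFmem hrowGmem x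
  have hull := hull_lemma Q (hpoolfin.subset hQsub) hQrowC E
    (fun y hyspan => by
      show Submodule.span ℝ {p | ∃ b, (p, b) ∈ pool ∧ p ⬝ᵥ y = b} = ⊤
      rw [eq_top_iff, ← hyspan]
      apply Submodule.span_mono
      rintro p ⟨b, hbQ, hb⟩
      exact ⟨b, hQsub hbQ, hb⟩)
    hxQ
  rw [convexHull_eq] at hull
  obtain ⟨ι, T, wgt, pt, hwgt0, hwgt1, hptmem, hcenter⟩ := hull
  have hxsum : (x : Fin n → ℝ) = ∑ i ∈ T, wgt i • pt i := by
    rw [← hcenter, Finset.centerMass_eq_of_sum_1 _ _ hwgt1]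
  have hptcube : ∀ i ∈ T, pt i ∈ Cube n := fun i hi => hCc _ (hptmem i hi).2
  obtain ⟨hfx, hgx⟩ := hpieces x hxQ
  have hsumf : f x = ∑ i ∈ T, wgt i * (cf jf + af jf ⬝ᵥ pt i) := by
    rw [hfx, hxsum, affine_sum T wgt pt hwgt1]
  have hsumg : g x = ∑ i ∈ T, wgt i * (cg jg + ag jg ⬝ᵥ pt i) := by
    rw [hgx, hxsum, affine_sum T wgt pt hwgt1]
  have hterm : ∀ i ∈ T, wgt i * (cg jg + ag jg ⬝ᵥ pt i) ≤
      wgt i * ((1 / δ) * (cf jf + af jf ⬝ᵥ pt i)) := by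
    intro i hi
    apply mul_le_mul_of_nonneg_left _ (hwgt0 i hi)
    have hcube_i : pt i ∈ Cube n := hptcube i hi
    obtain ⟨hfpt, hgpt⟩ := hpieces ⟨pt i, hcube_i⟩ (hptmem i hi).2
    rw [← hfpt, ← hgpt]
    by_cases hf0 : f ⟨pt i, hcube_i⟩ = 0
    · rw [hf0, hzero _ hf0]
      norm_num
    · have hδle := hδmin (pt i) (hptmem i hi).1 hcube_i hf0
      have hgle := (hgb ⟨pt i, hcube_i⟩).2
      have h5 : (1 / δ) * δ ≤ (1 / δ) * f ⟨pt i, hcube_i⟩ :=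
        mul_le_mul_of_nonneg_left hδle (by positivity)
      rw [one_div_mul_cancel (ne_of_gt hδ0)] at h5
      linarith
  have hgf : g x ≤ (1 / δ) * f x := by
    rw [hsumf, hsumg, Finset.mul_sum]
    calc ∑ i ∈ T, wgt i * (cg jg + ag jg ⬝ᵥ pt i)
        ≤ ∑ i ∈ T, wgt i * ((1 / δ) * (cf jf + af jf ⬝ᵥ pt i)) := Finset.sum_le_sum hterm
      _ = ∑ i ∈ T, 1 / δ * (wgt i * (cf jf + af jf ⬝ᵥ pt i)) := by
          apply Finset.sum_congr rfl
          intro i _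
          ring
  have hfx0 : 0 ≤ f x := (hfb x).1
  calc g x ≤ (1 / δ) * f x := hgf
    _ ≤ (k : ℝ) * f x := mul_le_mul_of_nonneg_right hk hfx0

end SSaux
namespace SSaux

section Quot2

open MVAlgebra

variable {n : ℕ} {f₀ : Cube n → ℝ} {D : Type} [DMVAlgebra D]
  {π : {f : Cube n → ℝ // IsPWLQ f} → D}

lemma mv_nmul_mem {I : Set D} (hI : IsMVIdeal I) {x : D} (hx : x ∈ I) (k : ℕ) :
    nmul k x ∈ I := by
  induction k with
  | zero => exact hI.1
  | succ k ih => exact hI.2.2 _ ih _ hx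

lemma mv_eq_univ {I : Set D} (hI : IsMVIdeal I)
    (h1 : MVAlgebra.star MVAlgebra.zero ∈ I) : I = Set.univ := by
  ext z; simp only [Set.mem_univ, iff_true]
  exact hI.2.1 _ h1 z (le_top z)

variable (hπ : IsQuotientByIdeal {g | memGen f₀ g} D π)
include hπ

theorem Mp_ideal_max (hf₀ : IsPWLQ f₀) (p : Cube n) (hp : f₀ p = 0) :
    IsMaximalMVIdeal {x : D | ∃ F, π F = x ∧ F.1 p = 0} := by
  set M := {x : D | ∃ F, π F = x ∧ F.1 p = 0} with hM
  have hMideal : IsMVIdeal M := by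
    refine ⟨⟨zeroF, pi_zero hπ, rfl⟩, ?_, ?_⟩
    · rintro x ⟨F, hF, hFp⟩ y hyx
      obtain ⟨G, rfl⟩ := hπ.1 y
      have h1 : π (subF G F) = MVAlgebra.zero := by
        rw [pi_sub hπ, hF]; exact hyx
      have h2 : (subF G F).1 p = 0 := memGen_zero_at hf₀ hp ((hπ.2.2.2.2 _).1 h1)
      refine ⟨G, rfl, ?_⟩
      have h3 := (G.2.2.1 p).1
      simp only [subF, starF, oplusF] at h2
      have h5 : 1 - G.1 p + F.1 p ≥ 1 := by
        rcases le_or_gt (1 - G.1 p + F.1 p) 1 with h5 | h5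
        · rw [min_eq_left h5] at h2; linarith
        · linarith
      rw [hFp] at h5; linarith
    · rintro x ⟨F, hF, hFp⟩ y ⟨G, hG, hGp⟩
      refine ⟨oplusF F G, ?_, ?_⟩
      · rw [pi_oplus hπ, hF, hG]
      · simp only [oplusF]; rw [hFp, hGp]; simp
  refine ⟨hMideal, ?_, ?_⟩
  · intro hMuniv
    have h1 : MVAlgebra.star MVAlgebra.zero ∈ M := hMuniv ▸ Set.mem_univ _
    obtain ⟨F, hF, hFp⟩ := h1
    have h2 : π (starF F) = MVAlgebra.zero := by
      rw [pi_star hπ, hF, MVAlgebra.star_star]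
    have h3 : (starF F).1 p = 0 := memGen_zero_at hf₀ hp ((hπ.2.2.2.2 _).1 h2)
    simp only [starF] at h3
    rw [hFp] at h3; norm_num at h3
  · intro J hJ hJuniv hMJ
    have hJM : J ⊆ M := by
      intro y hy
      obtain ⟨G, rfl⟩ := hπ.1 y
      by_contra hyM
      have hGp : 0 < G.1 p := by
        rcases lt_or_eq_of_le (G.2.2.1 p).1 with h | h
        · exact h
        · exact absurd ⟨G, rfl, h.symm⟩ hyM
      obtain ⟨m, hm⟩ := exists_nat_gt (1 / G.1 p)
      have hm1 : 1 < (m : ℝ) * G.1 p := by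
        rw [div_lt_iff₀ hGp] at hm; nlinarith
      have hW : (starF (truncF G m)).1 p = 0 := by
        simp only [starF, truncF, truncN]
        rw [min_eq_right hm1.le]; ring
      have hWJ : π (starF (truncF G m)) ∈ J := hMJ ⟨_, rfl, hW⟩
      have hSJ : π (truncF G m) ∈ J := by
        rw [pi_trunc hπ]; exact mv_nmul_mem hJ hy m
      have hone : oplusF (starF (truncF G m)) (truncF G m) = oneF := by
        apply Subtype.ext; funext x
        simp only [oplusF, starF, oneF]
        rw [sub_add_cancel]
        exact min_self 1
      have honeJ : MVAlgebra.star MVAlgebra.zero ∈ J := by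
        have h6 := hJ.2.2 _ hWJ _ hSJ
        rw [← pi_oplus hπ, hone, pi_one hπ] at h6
        exact h6
      exact hJuniv (mv_eq_univ hJ honeJ)
    exact Set.Subset.antisymm hJM hMJ

end Quot2

end SSaux

/-- Every finitely presented DMV-algebra is semisimple: if `D` is the
quotient of a free finitely generated DMV-algebra `DMV_n` by a principal ideal `(f₀]`,
then `D` is semisimple. -/
theorem finitely_presented_dmv_semisimple (n : ℕ)
    (f₀ : Cube n → ℝ) (hf₀ : IsPWLQ f₀)
    (D : Type) [DMVAlgebra D]
    (π : {f : Cube n → ℝ // IsPWLQ f} → D)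
    (hπ : IsQuotientByIdeal {g | memGen f₀ g} D π) :
    IsSemisimple D := by
  intro x hx
  obtain ⟨G, rfl⟩ := hπ.1 x
  have hzero : ∀ p : Cube n, f₀ p = 0 → G.1 p = 0 := by
    intro p hp
    obtain ⟨F, hF, hFp⟩ := hx _ (SSaux.Mp_ideal_max hπ hf₀ p hp)
    have h1 : G.1 p ≤ F.1 p := SSaux.le_at_zero hπ hf₀ hp hF.symm
    have h2 := (G.2.2.1 p).1
    rw [hFp] at h1
    linarith
  obtain ⟨k, hk⟩ := SSaux.key_lemma hf₀ G.2 hzero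
  exact (hπ.2.2.2.2 G).2 (SSaux.memGen_of_le hf₀ G.2 hk)
end

section
/- Let J be a principal ideal of DMV_n. Then there exists a rational polyhedron P ⊆ [0,1]^n such that DMV_n / J is isomorphic to DMV_n|_P, the DMV-algebra of restrictions to P of continuous piecewise linear functions [0,1]^n → [0,1] with rational coefficients; namely P = V(J). -/
open scoped BigOperators

/-- A point of `ℝ^n` with rational coordinates. -/
def HasRatCoords {n : ℕ} (v : Fin n → ℝ) : Prop := ∀ i, ∃ q : ℚ, v i = (q : ℝ)

/-- A rational polyhedron in `ℝ^n`: a finite union of simplexes (convex hulls of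
affinely independent finite sets) all of whose vertices have rational coordinates. -/
def IsRatPoly {n : ℕ} (P : Set (Fin n → ℝ)) : Prop :=
  ∃ (k : ℕ) (V : Fin k → Finset (Fin n → ℝ)),
    (∀ j, (∀ v ∈ V j, HasRatCoords v) ∧
      AffineIndependent ℝ ((↑) : ((V j : Set (Fin n → ℝ))) → (Fin n → ℝ))) ∧
    P = ⋃ j, convexHull ℝ (V j : Set (Fin n → ℝ))

namespace DMVP

/-- real affine evaluation of a rational affine functional -/
def affq {n : ℕ} (p : ℚ × (Fin n → ℚ)) (x : Fin n → ℝ) : ℝ :=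
  (p.1 : ℝ) + ∑ i, (p.2 i : ℝ) * x i

def HasPieces {n : ℕ} (f : Cube n → ℝ) (l : List (ℚ × (Fin n → ℚ))) : Prop :=
  ∀ x : Cube n, ∃ p ∈ l, f x = affq p x.1

theorem pieces_of_pwlq {n : ℕ} {f : Cube n → ℝ} (hf : IsPWLQ f) :
    ∃ l, HasPieces f l := by
  obtain ⟨-, -, k, c, a, h⟩ := hf
  refine ⟨(List.finRange k).map (fun j => (c j, a j)), fun x => ?_⟩
  obtain ⟨j, hj⟩ := h x
  exact ⟨(c j, a j), List.mem_map.2 ⟨j, List.mem_finRange j, rfl⟩, hj⟩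

theorem pwlq_of_pieces {n : ℕ} {f : Cube n → ℝ} (hcont : Continuous f)
    (hbd : ∀ x, 0 ≤ f x ∧ f x ≤ 1) {l : List (ℚ × (Fin n → ℚ))}
    (hl : HasPieces f l) : IsPWLQ f := by
  refine ⟨hcont, hbd, l.length, fun j => (l.get j).1, fun j => (l.get j).2, fun x => ?_⟩
  obtain ⟨p, hp, hx⟩ := hl x
  obtain ⟨j, hj⟩ := List.mem_iff_get.1 hp
  exact ⟨j, by rw [hx, ← hj]; rfl⟩

theorem pwlq_zero {n : ℕ} : IsPWLQ (fun _ : Cube n => (0 : ℝ)) := by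
  refine pwlq_of_pieces continuous_const (fun x => by norm_num)
    (l := [(0, fun _ => 0)]) (fun x => ?_)
  refine ⟨_, List.mem_singleton.2 rfl, ?_⟩
  simp [affq]

theorem pwlq_star {n : ℕ} {f : Cube n → ℝ} (hf : IsPWLQ f) :
    IsPWLQ (fun x => 1 - f x) := by
  obtain ⟨l, hl⟩ := pieces_of_pwlq hf
  refine pwlq_of_pieces (continuous_const.sub hf.1)
    (fun x => ⟨by linarith [(hf.2.1 x).2], by linarith [(hf.2.1 x).1]⟩)
    (l := l.map (fun p => (1 - p.1, fun i => - p.2 i))) (fun x => ?_)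
  obtain ⟨p, hp, hx⟩ := hl x
  refine ⟨_, List.mem_map.2 ⟨p, hp, rfl⟩, ?_⟩
  rw [hx]
  simp only [affq]
  push_cast
  simp only [neg_mul, Finset.sum_neg_distrib]
  ring

theorem pwlq_oplus {n : ℕ} {f g : Cube n → ℝ} (hf : IsPWLQ f) (hg : IsPWLQ g) :
    IsPWLQ (fun x => min (f x + g x) 1) := by
  obtain ⟨lf, hlf⟩ := pieces_of_pwlq hf
  obtain ⟨lg, hlg⟩ := pieces_of_pwlq hg
  refine pwlq_of_pieces ((hf.1.add hg.1).min continuous_const)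
    (fun x => ⟨le_min (add_nonneg (hf.2.1 x).1 (hg.2.1 x).1) zero_le_one, min_le_right _ _⟩)
    (l := (1, fun _ => 0) :: lf.flatMap (fun p => lg.map (fun q => (p.1 + q.1, p.2 + q.2))))
    (fun x => ?_)
  obtain ⟨p, hp, hxp⟩ := hlf x
  obtain ⟨q, hq, hxq⟩ := hlg x
  rcases le_or_gt (f x + g x) 1 with h | h
  · refine ⟨(p.1 + q.1, p.2 + q.2), List.mem_cons_of_mem _ ?_, ?_⟩
    · exact List.mem_flatMap.2 ⟨p, hp, List.mem_map.2 ⟨q, hq, rfl⟩⟩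
    · rw [min_eq_left h, hxp, hxq]
      simp only [affq, Pi.add_apply]
      push_cast
      simp only [add_mul, Finset.sum_add_distrib]
      ring
  · exact ⟨(1, fun _ => 0), List.mem_cons_self, by simp [affq, min_eq_right h.le]⟩

theorem ideal_vanish {n : ℕ} (S : Set (Cube n)) :
    IsIdealQ {g : Cube n → ℝ | IsPWLQ g ∧ ∀ x ∈ S, g x = 0} := by
  refine ⟨fun f hf => hf.1, ⟨pwlq_zero, fun x _ => rfl⟩, ?_, ?_⟩
  · intro f hf g hg hle
    exact ⟨hg, fun x hx =>
      le_antisymm (by rw [← hf.2 x hx]; exact hle x) (hg.2.1 x).1⟩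
  · intro f hf g hg
    exact ⟨pwlq_oplus hf.1 hg.1, fun x hx => by
      simp only [hf.2 x hx, hg.2 x hx]; norm_num⟩

theorem vanish_of_memGen {n : ℕ} {f₀ g : Cube n → ℝ} (hf₀ : IsPWLQ f₀)
    (hg : memGen f₀ g) {x : Cube n} (hx : f₀ x = 0) : g x = 0 :=
  (hg _ (ideal_vanish {y | f₀ y = 0}) ⟨hf₀, fun y hy => hy⟩).2 x hx

theorem memGen_self {n : ℕ} (f₀ : Cube n → ℝ) : memGen f₀ f₀ := fun _ _ h => h

theorem memGen_zero {n : ℕ} (f₀ : Cube n → ℝ) :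
    memGen f₀ (fun _ => (0:ℝ)) := fun _ hJ _ => hJ.2.1

theorem memGen_of_le_iter {n : ℕ} {f₀ u : Cube n → ℝ} (hf₀ : IsPWLQ f₀)
    (hu : IsPWLQ u) (m : ℕ) (h : ∀ x, u x ≤ min ((m : ℝ) * f₀ x) 1) :
    memGen f₀ u := by
  intro J hJ hfJ
  have key : ∀ k : ℕ, (fun x : Cube n => min ((k : ℝ) * f₀ x) 1) ∈ J := by
    intro k
    induction k with
    | zero =>
      have e : (fun x : Cube n => min ((0 : ℕ) * f₀ x : ℝ) 1) = fun _ => (0:ℝ) := by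
        funext x; norm_num
      rw [e]; exact hJ.2.1
    | succ k ih =>
      have h2 := hJ.2.2.2 _ ih f₀ hfJ
      have e : (fun x : Cube n => min (min ((k:ℝ) * f₀ x) 1 + f₀ x) 1)
          = fun x : Cube n => min (((k+1 : ℕ) : ℝ) * f₀ x) 1 := by
        funext x
        have h0 := (hf₀.2.1 x).1
        push_cast
        rcases le_or_gt ((k:ℝ) * f₀ x) 1 with hc | hc
        · rw [min_eq_left hc]
          congr 1
          ring
        · rw [min_eq_right hc.le]
          have : (1:ℝ) ≤ ((k:ℝ)+1) * f₀ x := by nlinarith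
          rw [min_eq_right this, min_eq_right (by linarith : (1:ℝ) ≤ 1 + f₀ x)]
      rw [← e]; exact h2
  exact hJ.2.2.1 _ (key m) u hu h


open Module Matrix in
private theorem rat_of_unique_sol {n m : ℕ} (c : Fin m → ℚ) (a : Fin m → Fin n → ℚ)
    (act : Finset (Fin m)) (y : Fin n → ℝ)
    (hsol : ∀ i ∈ act, (c i : ℝ) + ∑ j, (a i j : ℝ) * y j = 0)
    (huniq : ∀ d : Fin n → ℝ, (∀ i ∈ act, ∑ j, (a i j : ℝ) * d j = 0) → d = 0) :
    ∀ j, ∃ q : ℚ, y j = (q : ℝ) := by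
  classical
  -- rational "hat" matrix: rows outside `act` replaced by 0
  set Aq : Matrix (Fin m) (Fin n) ℚ := fun i j => if i ∈ act then a i j else 0 with hAq
  set A : Matrix (Fin m) (Fin n) ℝ := fun i j => ((Aq i j : ℚ) : ℝ) with hA
  -- kernel of A.mulVecLin is trivial
  have hker : LinearMap.ker A.mulVecLin = ⊥ := by
    rw [LinearMap.ker_eq_bot']
    intro d hd
    apply huniq
    intro i hi
    have := congrFun hd i
    change A.mulVec d i = 0 at this
    simpa [Matrix.mulVecLin_apply, Matrix.mulVec, dotProduct, hA, hAq, hi] using this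
  have hfr : finrank ℝ (Fin n → ℝ) = n := by simp
  have hrank : A.rank = n := by
    have := LinearMap.finrank_range_add_finrank_ker A.mulVecLin
    rw [hker, finrank_bot, add_zero, hfr] at this
    exact this
  -- rows of A span ℝⁿ
  have hrowspan : Submodule.span ℝ (Set.range fun i => (fun j => A i j)) = ⊤ := by
    have hrt : Aᵀ.rank = n := by rw [Matrix.rank_transpose]; exact hrank
    have hrange : LinearMap.range Aᵀ.mulVecLin = ⊤ := by
      apply Submodule.eq_top_of_finrank_eq
      rw [← Matrix.rank, hrt, hfr]
    rw [eq_top_iff, ← hrange]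
    rintro x ⟨v, rfl⟩
    have : Aᵀ.mulVecLin v = ∑ i, v i • (fun j => A i j) := by
      funext j
      simp [Matrix.mulVecLin_apply, Matrix.mulVec, dotProduct, Matrix.transpose,
        mul_comm]
    rw [this]
    exact Submodule.sum_mem _ fun i _ =>
      Submodule.smul_mem _ _ (Submodule.subset_span (Set.mem_range_self i))
  obtain ⟨b, hbsub, hbspan, hbli⟩ :=
    exists_linearIndependent ℝ (Set.range fun i => (fun j => A i j))
  rw [hrowspan] at hbspan
  have hbfin : b.Finite := Set.Finite.subset (Set.finite_range _) hbsub
  haveI : Fintype b := hbfin.fintype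
  have hbbasis : Basis b ℝ (Fin n → ℝ) := Basis.mk hbli (by rw [Subtype.range_coe, hbspan])
  have hbcard : Fintype.card b = n := by
    rw [← finrank_eq_card_basis hbbasis, hfr]
  have e : Fin n ≃ b := (Fintype.equivFinOfCardEq hbcard).symm
  -- choose row indices
  have hι : ∀ v : b, ∃ i : Fin m, (fun j => A i j) = (v : Fin n → ℝ) := fun v => hbsub v.2
  choose ι hι using hι
  -- square matrices
  set Mq : Matrix (Fin n) (Fin n) ℚ := fun k j => Aq (ι (e k)) j with hMq
  set M : Matrix (Fin n) (Fin n) ℝ := fun k j => A (ι (e k)) j with hM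
  have hMcast : M = (Rat.castHom ℝ).mapMatrix Mq := by
    funext k j; simp [hM, hMq, hA]; rfl
  -- rows of M are linearly independent
  have hMli : LinearIndependent ℝ (fun k => (fun j => M k j)) := by
    have : (fun k => (fun j : Fin n => M k j)) = (fun k => ((e k : Fin n → ℝ))) := by
      funext k; rw [← hι (e k)]
    rw [this]
    exact hbli.comp e e.injective
  have hdetM : M.det ≠ 0 := by
    intro hdet
    obtain ⟨v, hv0, hv⟩ := (Matrix.exists_vecMul_eq_zero_iff).2 hdet
    apply hv0
    have := Fintype.linearIndependent_iff.1 hMli v ?_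
    · funext k; exact this k
    · funext j
      have := congrFun hv j
      simpa [Matrix.vecMul, dotProduct] using this
  have hdetMq : Mq.det ≠ 0 := by
    intro h
    apply hdetM
    rw [hMcast, ← RingHom.map_det, h]
    simp
  -- rational right-hand side
  set bq : Fin n → ℚ := fun k => if ι (e k) ∈ act then -c (ι (e k)) else 0 with hbq
  have hMy : M.mulVec y = fun k => (bq k : ℝ) := by
    funext k
    by_cases hk : ι (e k) ∈ act
    · have := hsol _ hk
      simp only [Matrix.mulVec, dotProduct, hM, hA, hAq, hbq, hk, if_true]
      push_cast
      linarith [this]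
    · simp [Matrix.mulVec, dotProduct, hM, hA, hAq, hbq, hk]
  set yq : Fin n → ℚ := Mq⁻¹.mulVec bq with hyq
  have hMqyq : Mq.mulVec yq = bq := by
    rw [hyq, Matrix.mulVec_mulVec, Matrix.mul_nonsing_inv _ (isUnit_iff_ne_zero.2 hdetMq),
      Matrix.one_mulVec]
  have hMyq : M.mulVec (fun j => (yq j : ℝ)) = fun k => (bq k : ℝ) := by
    funext k
    have := congrFun hMqyq k
    simp only [Matrix.mulVec, dotProduct, hMcast] at this ⊢
    rw [← this]
    push_cast
    rfl
  have hyeq : y = fun j => (yq j : ℝ) := by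
    by_contra hne
    have hd : (fun j => y j - (yq j : ℝ)) ≠ 0 := by
      intro h
      apply hne
      funext j
      have := congrFun h j
      simp at this
      linarith
    have : M.det = 0 := by
      apply (Matrix.exists_mulVec_eq_zero_iff).1
      refine ⟨_, hd, ?_⟩
      have : M.mulVec (fun j => y j - (yq j : ℝ)) =
          M.mulVec y - M.mulVec (fun j => (yq j : ℝ)) := by
        funext k
        simp only [Matrix.mulVec, dotProduct, Pi.sub_apply, mul_sub]
        rw [Finset.sum_sub_distrib]
      rw [this, hMy, hMyq]
      simp
    exact hdetM this
  intro j
  exact ⟨yq j, congrFun hyeq j⟩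

theorem hpoly_conv {n m : ℕ} (c : Fin m → ℚ) (a : Fin m → Fin n → ℚ)
    (P : Set (Fin n → ℝ))
    (hPdef : P = {x | ∀ i, (c i : ℝ) + ∑ j, (a i j : ℝ) * x j ≤ 0})
    (hPC : P ⊆ Cube n) :
    ∃ V : Finset (Fin n → ℝ), (↑V : Set (Fin n → ℝ)) ⊆ P ∧
      (∀ v ∈ V, HasRatCoords v) ∧ P = convexHull ℝ (V : Set (Fin n → ℝ)) := by
  classical
  set φ : Fin m → (Fin n → ℝ) → ℝ := fun i x => (c i : ℝ) + ∑ j, (a i j : ℝ) * x j with hφ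
  set dt : Fin m → (Fin n → ℝ) → ℝ := fun i d => ∑ j, (a i j : ℝ) * d j with hdt
  have haff : ∀ (i) (x d : Fin n → ℝ) (t : ℝ), φ i (x + t • d) = φ i x + t * dt i d := by
    intro i x d t
    simp only [hφ, hdt, Pi.add_apply, Pi.smul_apply, smul_eq_mul]
    rw [Finset.sum_congr rfl (fun j _ => by ring :
        ∀ j ∈ Finset.univ, (a i j : ℝ) * (x j + t * d j)
          = (a i j : ℝ) * x j + t * ((a i j : ℝ) * d j)),
      Finset.sum_add_distrib, ← Finset.mul_sum]
    ring
  have hmemP : ∀ x, x ∈ P ↔ ∀ i, φ i x ≤ 0 := by intro x; rw [hPdef]; rfl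
  set act : (Fin n → ℝ) → Finset (Fin m) :=
    fun x => Finset.univ.filter (fun i => φ i x = 0) with hact
  have hact_mem : ∀ x i, i ∈ act x ↔ φ i x = 0 := by
    intro x i; simp [hact]
  set Vert : Set (Fin n → ℝ) :=
    {y | y ∈ P ∧ ∀ d : Fin n → ℝ, (∀ i ∈ act y, dt i d = 0) → d = 0} with hVert
  -- finiteness of Vert
  have hVfin : Vert.Finite := by
    have hinj : Set.InjOn act Vert := by
      intro y hy y' hy' hacteq
      have hd : ∀ i ∈ act y, dt i (y - y') = 0 := by
        intro i hi
        have h1 : φ i y = 0 := (hact_mem y i).1 hi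
        have h2 : φ i y' = 0 := (hact_mem y' i).1 (hacteq ▸ hi)
        simp only [hφ] at h1 h2
        simp only [hdt, Pi.sub_apply, mul_sub, Finset.sum_sub_distrib]
        linarith
      exact sub_eq_zero.1 (hy.2 _ hd)
    exact Set.Finite.of_finite_image (Set.toFinite _) hinj
  -- rationality of Vert
  have hVrat : ∀ v ∈ Vert, HasRatCoords v := by
    intro v hv
    refine rat_of_unique_sol c a (act v) v (fun i hi => ?_) hv.2
    exact (hact_mem v i).1 hi
  -- P is convex and closed
  have hφcont : ∀ i, Continuous (φ i) :=
    fun i => continuous_const.add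
      (continuous_finset_sum _ fun j _ => continuous_const.mul (continuous_apply j))
  have hPcl : IsClosed P := by
    rw [show P = ⋂ i, {x | φ i x ≤ 0} by rw [hPdef]; ext x; simp [hφ]]
    exact isClosed_iInter fun i => isClosed_le (hφcont i) continuous_const
  have hφcombo : ∀ (i) (x y : Fin n → ℝ) (α β : ℝ), α + β = 1 →
      φ i (α • x + β • y) = α * φ i x + β * φ i y := by
    intro i x y α β hab
    simp only [hφ, Pi.add_apply, Pi.smul_apply, smul_eq_mul]
    rw [Finset.sum_congr rfl (fun j _ => by ring :
        ∀ j ∈ Finset.univ, (a i j : ℝ) * (α * x j + β * y j)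
          = α * ((a i j : ℝ) * x j) + β * ((a i j : ℝ) * y j)),
      Finset.sum_add_distrib, ← Finset.mul_sum, ← Finset.mul_sum]
    linear_combination (c i : ℝ) * hab.symm
  have hPconv : Convex ℝ P := by
    intro x hx y hy α β hα hβ hab
    rw [hmemP]
    intro i
    rw [hφcombo i x y α β hab]
    have h1 := (hmemP x).1 hx i
    have h2 := (hmemP y).1 hy i
    nlinarith
  -- the small-step lemma
  have hstep : ∀ (y : Fin n → ℝ) (d : Fin n → ℝ), y ∈ P →
      (∀ i, 0 < dt i d → φ i y < 0) →
      ∃ ε > 0, ∀ t : ℝ, 0 ≤ t → t ≤ ε → y + t • d ∈ P := by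
    intro y d hy hd
    set δ : Fin m → ℝ := fun i => if h : 0 < dt i d then (-φ i y) / dt i d else 1 with hδ
    have hδpos : ∀ i, 0 < δ i := by
      intro i
      by_cases h : 0 < dt i d
      · have e : δ i = (-φ i y) / dt i d := by simp only [hδ]; rw [dif_pos h]
        rw [e]
        have := hd i h
        exact div_pos (by linarith) h
      · have e : δ i = 1 := by simp only [hδ]; rw [dif_neg h]
        rw [e]; norm_num
    set ε : ℝ := (insert (1:ℝ) (Finset.univ.image δ)).min' (Finset.insert_nonempty _ _)
      with hε
    have hεle : ∀ i, ε ≤ δ i := by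
      intro i
      apply Finset.min'_le
      exact Finset.mem_insert_of_mem (Finset.mem_image_of_mem δ (Finset.mem_univ i))
    have hεpos : 0 < ε := by
      have hm := (insert (1:ℝ) (Finset.univ.image δ)).min'_mem (Finset.insert_nonempty _ _)
      rw [← hε] at hm
      rcases Finset.mem_insert.1 hm with h | h
      · rw [h]; norm_num
      · obtain ⟨i, -, hi⟩ := Finset.mem_image.1 h
        rw [← hi]; exact hδpos i
    refine ⟨ε, hεpos, fun t ht htε => ?_⟩
    rw [hmemP]
    intro i
    rw [haff]
    rcases le_or_gt (dt i d) 0 with hle | hlt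
    · have h1 := (hmemP y).1 hy i
      have h2 : t * dt i d ≤ 0 := mul_nonpos_of_nonneg_of_nonpos ht hle
      linarith
    · have hφneg := hd i hlt
      have hδi : δ i = (-φ i y) / dt i d := by simp only [hδ]; rw [dif_pos hlt]
      have htle : t ≤ (-φ i y) / dt i d := by
        rw [← hδi]; exact le_trans htε (hεle i)
      rw [le_div_iff₀ hlt] at htle
      linarith
  -- the ray lemma
  have hray : ∀ x ∈ P, ∀ d : Fin n → ℝ, d ≠ 0 → (∀ i ∈ act x, dt i d = 0) →
      ∃ t : ℝ, 0 < t ∧ x + t • d ∈ P ∧ act x ⊂ act (x + t • d) := by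
    intro x hx d hd0 hdact
    set T : Set ℝ := {t | 0 ≤ t ∧ x + t • d ∈ P} with hT
    have h0T : (0:ℝ) ∈ T := ⟨le_refl 0, by simpa using hx⟩
    have hTbdd : BddAbove T := by
      obtain ⟨j, hj⟩ : ∃ j, d j ≠ 0 := by
        by_contra h
        push_neg at h
        exact hd0 (funext h)
      refine ⟨1 / |d j|, fun t ht => ?_⟩
      have h1 := (hPC ht.2) j
      have h2 := (hPC hx) j
      simp only [Pi.add_apply, Pi.smul_apply, smul_eq_mul] at h1
      have habs : |t * d j| ≤ 1 := by
        rw [abs_le]; constructor <;> nlinarith [h1.1, h1.2, h2.1, h2.2]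
      have hdj : 0 < |d j| := abs_pos.2 hj
      have h3 : |t| ≤ 1 / |d j| := by
        rw [le_div_iff₀ hdj, ← abs_mul]; exact habs
      exact le_trans (le_abs_self t) h3
    have hTcl : IsClosed T := by
      rw [show T = Set.Ici (0:ℝ) ∩ (fun t : ℝ => x + t • d) ⁻¹' P by
        ext t; simp [hT, Set.mem_Ici]]
      exact isClosed_Ici.inter (hPcl.preimage
        (continuous_const.add (continuous_id.smul continuous_const)))
    set tp := sSup T with htp
    have htpT : tp ∈ T := hTcl.csSup_mem ⟨0, h0T⟩ hTbdd
    have htppos : 0 < tp := by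
      have hside : ∀ i, 0 < dt i d → φ i x < 0 := by
        intro i hdt'
        rcases lt_or_eq_of_le ((hmemP x).1 hx i) with h | h
        · exact h
        · exfalso
          rw [hdact i ((hact_mem x i).2 h)] at hdt'
          exact lt_irrefl 0 hdt'
      obtain ⟨ε, hε, hεT⟩ := hstep x d hx hside
      have hmem : ε ∈ T := ⟨le_of_lt hε, hεT ε (le_of_lt hε) (le_refl _)⟩
      exact lt_of_lt_of_le hε (le_csSup hTbdd hmem)
    have hyP : x + tp • d ∈ P := htpT.2
    have hnew : ∃ i, φ i (x + tp • d) = 0 ∧ dt i d ≠ 0 := by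
      by_contra h
      push_neg at h
      have hside2 : ∀ i, 0 < dt i d → φ i (x + tp • d) < 0 := by
        intro i hdt'
        rcases lt_or_eq_of_le ((hmemP _).1 hyP i) with hlt | heq
        · exact hlt
        · exact absurd (h i heq) (ne_of_gt hdt')
      obtain ⟨ε, hε, hεT⟩ := hstep (x + tp • d) d hyP hside2
      have hmem : tp + ε ∈ T := by
        refine ⟨by linarith [htpT.1], ?_⟩
        have h2 := hεT ε (le_of_lt hε) (le_refl _)
        have e : x + (tp + ε) • d = x + tp • d + ε • d := by
          rw [add_assoc, ← add_smul]
        rw [e]; exact h2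
      have := le_csSup hTbdd hmem
      linarith
    obtain ⟨inew, hinew1, hinew2⟩ := hnew
    refine ⟨tp, htppos, hyP, ?_⟩
    have hsub : act x ⊆ act (x + tp • d) := by
      intro i hi
      rw [hact_mem, haff, (hact_mem x i).1 hi, hdact i hi]
      ring
    rw [Finset.ssubset_iff_of_subset hsub]
    exact ⟨inew, (hact_mem _ inew).2 hinew1, fun hinx => hinew2 (hdact inew hinx)⟩
  -- claim C : non-vertices are proper combinations
  have claimC : ∀ x ∈ P, x ∉ Vert → ∃ y z : Fin n → ℝ, y ∈ P ∧ z ∈ P ∧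
      act x ⊂ act y ∧ act x ⊂ act z ∧ x ∈ segment ℝ y z := by
    intro x hx hv
    have hex : ¬ ∀ d : Fin n → ℝ, (∀ i ∈ act x, dt i d = 0) → d = 0 := by
      intro hall; exact hv ⟨hx, hall⟩
    push_neg at hex
    obtain ⟨d, hdact, hd0⟩ := hex
    obtain ⟨tp, htp, hyP, hay⟩ := hray x hx d hd0 hdact
    obtain ⟨tm, htm, hzP, haz⟩ := hray x hx (-d) (by simpa using hd0)
      (by
        intro i hi
        have e : dt i (-d) = - dt i d := by
          simp only [hdt, Pi.neg_apply, mul_neg, Finset.sum_neg_distrib]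
        rw [e, hdact i hi, neg_zero])
    refine ⟨x + tp • d, x + tm • (-d), hyP, hzP, hay, haz, ?_⟩
    refine ⟨tm / (tp + tm), tp / (tp + tm), by positivity, by positivity, ?_, ?_⟩
    · field_simp
      ring
    · funext j
      simp only [Pi.add_apply, Pi.smul_apply, Pi.neg_apply, smul_eq_mul]
      have hs : tp + tm ≠ 0 := by positivity
      field_simp
      ring
  -- main induction
  have hmain : ∀ (k : ℕ) (x), x ∈ P → m - (act x).card ≤ k → x ∈ convexHull ℝ Vert := by
    intro k
    induction k with
    | zero =>
      intro x hx hcard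
      by_cases hv : x ∈ Vert
      · exact subset_convexHull ℝ Vert hv
      · exfalso
        obtain ⟨y, z, hyP, hzP, hay, -, -⟩ := claimC x hx hv
        have h2 := Finset.card_lt_card hay
        have h3 : (act y).card ≤ m := by
          have := Finset.card_le_univ (act y)
          simpa using this
        omega
    | succ k ih =>
      intro x hx hcard
      by_cases hv : x ∈ Vert
      · exact subset_convexHull ℝ Vert hv
      · obtain ⟨y, z, hyP, hzP, hay, haz, hseg⟩ := claimC x hx hv
        have h3 : ∀ w : Fin n → ℝ, act x ⊂ act w → m - (act w).card ≤ k := by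
          intro w hw
          have := Finset.card_lt_card hw
          omega
        exact (convex_convexHull ℝ Vert).segment_subset
          (ih y hyP (h3 y hay)) (ih z hzP (h3 z haz)) hseg
  refine ⟨hVfin.toFinset, ?_, ?_, ?_⟩
  · intro v hv
    rw [Set.Finite.coe_toFinset] at hv
    exact hv.1
  · intro v hv
    rw [Set.Finite.mem_toFinset] at hv
    exact hVrat v hv
  · apply le_antisymm
    · intro x hx
      rw [Set.Finite.coe_toFinset]
      exact hmain m x hx (by omega)
    · rw [Set.Finite.coe_toFinset]
      exact convexHull_min (fun v hv => hv.1) hPconv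

theorem constancy {n p : ℕ} (C : Set (Fin n → ℝ)) (hconv : Convex ℝ C)
    (L : Fin p → (Fin n → ℝ) → ℝ)
    (hLaff : ∀ (j) (x y : Fin n → ℝ) (α β : ℝ), α + β = 1 →
      L j (α • x + β • y) = α * L j x + β * L j y)
    (hLcont : ∀ j, Continuous (L j))
    (hsign : ∀ j k, (∀ x ∈ C, L j x ≤ L k x) ∨ (∀ x ∈ C, L k x ≤ L j x))
    (F : (Fin n → ℝ) → ℝ) (hF : Continuous F)
    (hsel : ∀ x ∈ C, ∃ j, F x = L j x)
    {x₀ : Fin n → ℝ} (hx₀ : x₀ ∈ C) :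
    ∃ j, ∀ x ∈ C, F x = L j x := by
  classical
  set Bad : Finset (Fin p × Fin p) :=
    Finset.univ.filter (fun jk => ∃ y ∈ C, L jk.1 y ≠ L jk.2 y) with hBad
  have hBad_mem : ∀ jk : Fin p × Fin p, jk ∈ Bad ↔ ∃ y ∈ C, L jk.1 y ≠ L jk.2 y := by
    intro jk; simp [hBad]
  have hnotBad : ∀ jk : Fin p × Fin p, jk ∉ Bad → ∀ y ∈ C, L jk.1 y = L jk.2 y := by
    intro jk h y hy
    by_contra hne
    exact h ((hBad_mem jk).2 ⟨y, hy, hne⟩)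
  -- finiteness of the set of "bad" segment parameters
  have finbad : ∀ (x y : Fin n → ℝ) (s : Finset (Fin p × Fin p)),
      (∀ jk ∈ s, L jk.1 x - L jk.2 x ≠ 0 ∨ L jk.1 y - L jk.2 y ≠ 0) →
      {t : ℝ | ∃ jk ∈ s,
        (1-t) * (L jk.1 x - L jk.2 x) + t * (L jk.1 y - L jk.2 y) = 0}.Finite := by
    intro x y s hs
    have hsub : {t : ℝ | ∃ jk ∈ s,
        (1-t) * (L jk.1 x - L jk.2 x) + t * (L jk.1 y - L jk.2 y) = 0} ⊆
        ⋃ jk ∈ (s : Set (Fin p × Fin p)),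
          {t : ℝ | (1-t) * (L jk.1 x - L jk.2 x) + t * (L jk.1 y - L jk.2 y) = 0} := by
      intro t ht
      obtain ⟨jk, hjk, h⟩ := ht
      exact Set.mem_biUnion hjk h
    refine Set.Finite.subset (Set.Finite.biUnion (Finset.finite_toSet _) ?_) hsub
    intro jk hjk
    apply Set.Subsingleton.finite
    intro t1 h1 t2 h2
    simp only [Set.mem_setOf_eq] at h1 h2
    set A := L jk.1 x - L jk.2 x with hA
    set B := L jk.1 y - L jk.2 y with hB
    have hAB : A ≠ 0 ∨ B ≠ 0 := hs jk hjk
    by_contra hne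
    have hd : (t1 - t2) * (B - A) = 0 := by linear_combination h1 - h2
    rcases mul_eq_zero.1 hd with h | h
    · exact hne (by linarith [sub_eq_zero.1 h])
    · have hBA : B = A := sub_eq_zero.1 h
      have hA0 : A = 0 := by linear_combination h1 - t1 * h
      rcases hAB with h' | h'
      · exact h' hA0
      · exact h' (by rw [hBA]; exact hA0)
  -- a point where all bad pairs separate
  have hz : ∃ z ∈ C, ∀ jk ∈ Bad, L jk.1 z ≠ L jk.2 z := by
    have key : ∀ s : Finset (Fin p × Fin p), s ⊆ Bad →
        ∃ z ∈ C, ∀ jk ∈ s, L jk.1 z ≠ L jk.2 z := by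
      intro s
      induction s using Finset.induction_on with
      | empty => intro _; exact ⟨x₀, hx₀, by simp⟩
      | @insert jk s hjk ih =>
        intro hsub
        obtain ⟨z', hz'C, hz'⟩ := ih (fun x hx => hsub (Finset.mem_insert_of_mem hx))
        obtain ⟨y, hyC, hy⟩ := (hBad_mem jk).1 (hsub (Finset.mem_insert_self _ _))
        have hfin := finbad z' y (insert jk s) ?side
        case side =>
          intro il hil
          rcases Finset.mem_insert.1 hil with rfl | hil'
          · exact Or.inr (sub_ne_zero.2 hy)
          · exact Or.inl (sub_ne_zero.2 (hz' il hil'))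
        obtain ⟨t, htIoc, htbad⟩ :
            ∃ t, t ∈ Set.Ioc (0:ℝ) 1 ∧ t ∉ {t : ℝ | ∃ il ∈ insert jk s,
              (1-t) * (L il.1 z' - L il.2 z') + t * (L il.1 y - L il.2 y) = 0} := by
          have hinf : (Set.Ioc (0:ℝ) 1).Infinite := Set.Ioc_infinite (by norm_num)
          obtain ⟨t, ht⟩ := (hinf.diff hfin).nonempty
          exact ⟨t, ht.1, ht.2⟩
        refine ⟨(1-t) • z' + t • y, hconv hz'C hyC (by linarith [htIoc.2])
          htIoc.1.le (by ring), ?_⟩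
        intro il hil heq
        apply htbad
        refine ⟨il, hil, ?_⟩
        have hc1 := hLaff il.1 z' y (1-t) t (by ring)
        have hc2 := hLaff il.2 z' y (1-t) t (by ring)
        rw [hc1, hc2] at heq
        linarith
    exact key Bad (subset_refl _)
  obtain ⟨z, hzC, hzsep⟩ := hz
  -- C' : the set of separating points
  set C' : Set (Fin n → ℝ) := {x | x ∈ C ∧ ∀ jk ∈ Bad, L jk.1 x ≠ L jk.2 x} with hC'
  have hzC' : z ∈ C' := ⟨hzC, hzsep⟩
  have hC'conv : Convex ℝ C' := by
    intro x hx y hy α β hα hβ hab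
    refine ⟨hconv hx.1 hy.1 hα hβ hab, ?_⟩
    intro jk hjk
    have hcombo1 := hLaff jk.1 x y α β hab
    have hcombo2 := hLaff jk.2 x y α β hab
    have key : ∀ (u v : (Fin n → ℝ) → ℝ), (∀ w ∈ C, u w ≤ v w) →
        (u x ≠ v x) → (u y ≠ v y) →
        (u (α • x + β • y) = α * u x + β * u y) →
        (v (α • x + β • y) = α * v x + β * v y) →
        u (α • x + β • y) ≠ v (α • x + β • y) := by
      intro u v hle hux huy hcu hcv
      have h1 : u x < v x := lt_of_le_of_ne (hle x hx.1) hux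
      have h2 : u y < v y := lt_of_le_of_ne (hle y hy.1) huy
      rw [hcu, hcv]
      intro heq
      rcases eq_or_lt_of_le hα with hα0 | hα0
      · refine huy ?_
        rw [← hα0] at heq hab
        have hβ1 : β = 1 := by linarith
        rw [hβ1] at heq
        simpa using heq
      · rcases eq_or_lt_of_le hβ with hβ0 | hβ0
        · refine hux ?_
          rw [← hβ0] at heq hab
          have hα1 : α = 1 := by linarith
          rw [hα1] at heq
          simpa using heq
        · have e1 := mul_lt_mul_of_pos_left h1 hα0
          have e2 := mul_lt_mul_of_pos_left h2 hβ0
          linarith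
    rcases hsign jk.1 jk.2 with hle | hle
    · exact key (L jk.1) (L jk.2) hle (hx.2 jk hjk) (hy.2 jk hjk) hcombo1 hcombo2
    · intro heq
      exact key (L jk.2) (L jk.1) hle (fun h => (hx.2 jk hjk) h.symm)
        (fun h => (hy.2 jk hjk) h.symm) hcombo2 hcombo1 heq.symm
  -- F coincides with a single piece on C'
  obtain ⟨j₀, hj₀⟩ := hsel z hzC
  have hC'const : ∀ x ∈ C', F x = L j₀ x := by
    set K : Set (Fin n → ℝ) :=
      ⋃ j ∈ (Finset.univ.filter (fun j : Fin p => (j, j₀) ∈ Bad) : Finset (Fin p)),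
        {x | F x = L j x} with hK
    have hKcl : IsClosed K := by
      apply Set.Finite.isClosed_biUnion (Finset.finite_toSet _)
      intro j _
      exact isClosed_eq hF (hLcont j)
    have hKnot : ∀ x ∈ C', F x = L j₀ x → x ∉ K := by
      intro x hx hFx hxK
      obtain ⟨j, hj, hxj⟩ := Set.mem_iUnion₂.1 hxK
      have hjBad : (j, j₀) ∈ Bad := (Finset.mem_filter.1 hj).2
      have hxj' : F x = L j x := hxj
      exact hx.2 (j, j₀) hjBad (by rw [← hxj']; exact hFx)
    intro x hx
    by_contra hne
    have hpc := hC'conv.isPreconnected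
    have hu : IsOpen Kᶜ := hKcl.isOpen_compl
    have hv : IsOpen {w : Fin n → ℝ | F w = L j₀ w}ᶜ :=
      (isClosed_eq hF (hLcont j₀)).isOpen_compl
    have hsub : C' ⊆ Kᶜ ∪ {w : Fin n → ℝ | F w = L j₀ w}ᶜ := by
      intro w hw
      by_cases hFw : F w = L j₀ w
      · exact Or.inl (hKnot w hw hFw)
      · exact Or.inr hFw
    have hne1 : (C' ∩ Kᶜ).Nonempty := ⟨z, hzC', hKnot z hzC' hj₀⟩
    have hne2 : (C' ∩ {w : Fin n → ℝ | F w = L j₀ w}ᶜ).Nonempty := ⟨x, hx, hne⟩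
    obtain ⟨w, hwC', hwu, hwv⟩ := hpc _ _ hu hv hsub hne1 hne2
    obtain ⟨j, hFj⟩ := hsel w hwC'.1
    by_cases hjB : (j, j₀) ∈ Bad
    · apply hwu
      exact Set.mem_biUnion (Finset.mem_filter.2 ⟨Finset.mem_univ _, hjB⟩) hFj
    · exact hwv (show F w = L j₀ w by rw [hFj]; exact hnotBad (j, j₀) hjB w hwC'.1)
  -- extend from C' to C by continuity along segments towards z
  refine ⟨j₀, fun x hx => ?_⟩
  have hfin := finbad x z Bad (fun jk hjk => Or.inr (sub_ne_zero.2 (hzsep jk hjk)))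
  have hch : ∀ i : ℕ, ∃ t : ℝ, (t ∈ Set.Ioc (0:ℝ) (1/(i+1:ℝ))) ∧
      t ∉ {t : ℝ | ∃ jk ∈ Bad,
        (1-t) * (L jk.1 x - L jk.2 x) + t * (L jk.1 z - L jk.2 z) = 0} := by
    intro i
    have hinf : (Set.Ioc (0:ℝ) (1/(i+1:ℝ))).Infinite := Set.Ioc_infinite (by positivity)
    obtain ⟨t, ht⟩ := (hinf.diff hfin).nonempty
    exact ⟨t, ht.1, ht.2⟩
  choose u hu1 hu2 using hch
  have hu0 : Filter.Tendsto u Filter.atTop (nhds 0) := by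
    have hle : ∀ i : ℕ, u i ≤ 1/(i+1:ℝ) := fun i => (hu1 i).2
    have hge : ∀ i : ℕ, (0:ℝ) ≤ u i := fun i => (hu1 i).1.le
    exact tendsto_of_tendsto_of_tendsto_of_le_of_le tendsto_const_nhds
      tendsto_one_div_add_atTop_nhds_zero_nat hge hle
  set w : ℕ → (Fin n → ℝ) := fun i => (1 - u i) • x + (u i) • z with hw
  have hwC' : ∀ i, w i ∈ C' := by
    intro i
    have hui1 : u i ≤ 1 := le_trans (hu1 i).2 (by
      rw [div_le_one (by positivity)]; norm_num)
    refine ⟨hconv hx hzC (by linarith [hui1]) (hu1 i).1.le (by ring), ?_⟩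
    intro jk hjk heq
    apply hu2 i
    refine ⟨jk, hjk, ?_⟩
    have hc1 := hLaff jk.1 x z (1 - u i) (u i) (by ring)
    have hc2 := hLaff jk.2 x z (1 - u i) (u i) (by ring)
    rw [hw] at heq
    simp only at heq
    rw [hc1, hc2] at heq
    linarith
  have hlim : Filter.Tendsto w Filter.atTop (nhds x) := by
    have hc : Continuous fun t : ℝ => (1-t) • x + t • z :=
      ((continuous_const.sub continuous_id).smul continuous_const).add
        (continuous_id.smul continuous_const)
    have := (hc.tendsto 0).comp hu0
    simpa [hw, Function.comp_def] using this
  have h1 : Filter.Tendsto (fun i => F (w i)) Filter.atTop (nhds (F x)) :=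
    (hF.tendsto x).comp hlim
  have h2 : Filter.Tendsto (fun i => L j₀ (w i)) Filter.atTop (nhds (L j₀ x)) :=
    ((hLcont j₀).tendsto x).comp hlim
  have heq : (fun i => F (w i)) = fun i => L j₀ (w i) :=
    funext fun i => hC'const _ (hwC' i)
  rw [heq] at h1
  exact tendsto_nhds_unique h1 h2

-- basic affq lemmas
theorem affq_cont {n : ℕ} (p : ℚ × (Fin n → ℚ)) : Continuous (affq p) :=
  continuous_const.add
    (continuous_finset_sum _ fun j _ => continuous_const.mul (continuous_apply j))

theorem affq_combo {n : ℕ} (p : ℚ × (Fin n → ℚ)) (x y : Fin n → ℝ) (α β : ℝ)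
    (hab : α + β = 1) :
    affq p (α • x + β • y) = α * affq p x + β * affq p y := by
  simp only [affq, Pi.add_apply, Pi.smul_apply, smul_eq_mul]
  rw [Finset.sum_congr rfl (fun j _ => by ring :
      ∀ j ∈ Finset.univ, (p.2 j : ℝ) * (α * x j + β * y j)
        = α * ((p.2 j : ℝ) * x j) + β * ((p.2 j : ℝ) * y j)),
    Finset.sum_add_distrib, ← Finset.mul_sum, ← Finset.mul_sum]
  linear_combination (p.1 : ℝ) * hab.symm

theorem affq_sub {n : ℕ} (p q : ℚ × (Fin n → ℚ)) (x : Fin n → ℝ) :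
    affq (p.1 - q.1, p.2 - q.2) x = affq p x - affq q x := by
  simp only [affq, Pi.sub_apply]
  push_cast
  rw [Finset.sum_congr rfl (fun j _ => by ring :
      ∀ j ∈ Finset.univ, ((p.2 j : ℝ) - (q.2 j : ℝ)) * x j
        = (p.2 j : ℝ) * x j - (q.2 j : ℝ) * x j),
    Finset.sum_sub_distrib]
  ring

theorem affq_centerMass {n : ℕ} (p : ℚ × (Fin n → ℚ)) (V : Finset (Fin n → ℝ))
    (w : (Fin n → ℝ) → ℝ) (hw : ∑ v ∈ V, w v = 1) :
    affq p (V.centerMass w id) = ∑ v ∈ V, w v * affq p v := by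
  rw [Finset.centerMass, hw, inv_one, one_smul]
  simp only [affq]
  have happ : ∀ j, (∑ v ∈ V, w v • id v) j = ∑ v ∈ V, w v * v j := by
    intro j
    rw [Finset.sum_apply]
    exact Finset.sum_congr rfl fun v _ => rfl
  calc (p.1 : ℝ) + ∑ j, (p.2 j : ℝ) * (∑ v ∈ V, w v • id v) j
      = (p.1 : ℝ) + ∑ j, ∑ v ∈ V, (p.2 j : ℝ) * (w v * v j) := by
        congr 1
        refine Finset.sum_congr rfl fun j _ => ?_
        rw [happ j, Finset.mul_sum]
    _ = (p.1 : ℝ) + ∑ v ∈ V, ∑ j, (p.2 j : ℝ) * (w v * v j) := by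
        rw [Finset.sum_comm]
    _ = (∑ v ∈ V, w v) * (p.1 : ℝ) + ∑ v ∈ V, w v * ∑ j, (p.2 j : ℝ) * v j := by
        rw [hw, one_mul]
        congr 1
        refine Finset.sum_congr rfl fun v _ => ?_
        rw [Finset.mul_sum]
        refine Finset.sum_congr rfl fun j _ => by ring
    _ = ∑ v ∈ V, w v * ((p.1 : ℝ) + ∑ j, (p.2 j : ℝ) * v j) := by
        rw [Finset.sum_mul, ← Finset.sum_add_distrib]
        refine Finset.sum_congr rfl fun v _ => by ring

-- H-polyhedra described by lists
def HpolyL {n : ℕ} (l : List (ℚ × (Fin n → ℚ))) : Set (Fin n → ℝ) :=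
  {x | ∀ p ∈ l, affq p x ≤ 0}

theorem HpolyL_convex {n : ℕ} (l : List (ℚ × (Fin n → ℚ))) : Convex ℝ (HpolyL l) := by
  intro x hx y hy α β hα hβ hab
  intro p hp
  rw [affq_combo p x y α β hab]
  have h1 := hx p hp
  have h2 := hy p hp
  have e1 : α * affq p x ≤ 0 := mul_nonpos_of_nonneg_of_nonpos hα h1
  have e2 : β * affq p y ≤ 0 := mul_nonpos_of_nonneg_of_nonpos hβ h2
  linarith

theorem hpolyL_conv {n : ℕ} (l : List (ℚ × (Fin n → ℚ)))
    (hPC : HpolyL l ⊆ Cube n) :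
    ∃ V : Finset (Fin n → ℝ), (↑V : Set (Fin n → ℝ)) ⊆ HpolyL l ∧
      (∀ v ∈ V, HasRatCoords v) ∧ HpolyL l = convexHull ℝ (V : Set (Fin n → ℝ)) := by
  have he : HpolyL l = {x : Fin n → ℝ | ∀ i : Fin l.length,
      ((l.get i).1 : ℝ) + ∑ j, ((l.get i).2 j : ℝ) * x j ≤ 0} := by
    ext x
    constructor
    · intro hx i
      exact hx (l.get i) (List.get_mem l i)
    · intro hx p hp
      obtain ⟨i, hi⟩ := List.mem_iff_get.1 hp
      rw [← hi]
      exact hx i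
  exact hpoly_conv (fun i => (l.get i).1) (fun i => (l.get i).2) (HpolyL l) he hPC

-- the cube as an H-polyhedron
def cubeL (n : ℕ) : List (ℚ × (Fin n → ℚ)) :=
  (List.finRange n).flatMap (fun i =>
    [(0, fun j => if j = i then -1 else 0), (-1, fun j => if j = i then 1 else 0)])

theorem sum_single {n : ℕ} (i : Fin n) (c : ℚ) (x : Fin n → ℝ) :
    ∑ j, (((if j = i then c else 0 : ℚ) : ℝ)) * x j = (c : ℝ) * x i := by
  rw [Finset.sum_eq_single i]
  · simp
  · intro j _ hj
    simp [hj]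
  · intro h
    exact absurd (Finset.mem_univ i) h

theorem cubeL_eq {n : ℕ} : HpolyL (cubeL n) = Cube n := by
  ext x
  constructor
  · intro hx i
    have h1 := hx (0, fun j => if j = i then -1 else 0)
      (by
        apply List.mem_flatMap.2
        exact ⟨i, List.mem_finRange i, by simp⟩)
    have h2 := hx (-1, fun j => if j = i then 1 else 0)
      (by
        apply List.mem_flatMap.2
        exact ⟨i, List.mem_finRange i, by simp⟩)
    simp only [affq] at h1 h2
    rw [sum_single i (-1) x] at h1
    rw [sum_single i 1 x] at h2
    push_cast at h1 h2
    constructor <;> linarith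
  · intro hx p hp
    obtain ⟨i, -, hi⟩ := List.mem_flatMap.1 hp
    have := hx i
    rcases List.mem_cons.1 hi with h | h'
    · subst h
      simp only [affq]
      rw [sum_single i (-1) x]
      push_cast
      linarith [this.1]
    · have h : p = (-1, fun j => if j = i then 1 else 0) := List.mem_singleton.1 h'
      subst h
      simp only [affq]
      rw [sum_single i 1 x]
      push_cast
      linarith [this.2]

-- clamping extension of functions on the cube
def clamp {n : ℕ} (x : Fin n → ℝ) : Fin n → ℝ := fun i => max 0 (min 1 (x i))

theorem clamp_mem {n : ℕ} (x : Fin n → ℝ) : clamp x ∈ Cube n := by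
  intro i
  constructor
  · exact le_max_left _ _
  · simp only [clamp]
    exact max_le zero_le_one (min_le_left _ _)

theorem clamp_id {n : ℕ} {x : Fin n → ℝ} (hx : x ∈ Cube n) : clamp x = x := by
  funext i
  have := hx i
  simp only [clamp]
  rw [min_eq_right this.2, max_eq_right this.1]

def extC {n : ℕ} (f : Cube n → ℝ) : (Fin n → ℝ) → ℝ :=
  fun x => f ⟨clamp x, clamp_mem x⟩

theorem extC_cont {n : ℕ} {f : Cube n → ℝ} (hf : Continuous f) :
    Continuous (extC f) := by
  apply hf.comp
  apply Continuous.subtype_mk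
  exact continuous_pi fun i =>
    continuous_const.max (continuous_const.min (continuous_apply i))

theorem extC_eq {n : ℕ} (f : Cube n → ℝ) (x : Cube n) : extC f x.1 = f x :=
  congrArg f (Subtype.ext (clamp_id x.2))

-- signed difference constraints
def sgnDiff {n : ℕ} (b : Bool) (p q : ℚ × (Fin n → ℚ)) : ℚ × (Fin n → ℚ) :=
  if b then (q.1 - p.1, q.2 - p.2) else (p.1 - q.1, p.2 - q.2)

theorem affq_sgnDiff_true {n : ℕ} (p q : ℚ × (Fin n → ℚ)) (x : Fin n → ℝ) :
    affq (sgnDiff true p q) x = affq q x - affq p x := by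
  have e : sgnDiff true p q = (q.1 - p.1, q.2 - p.2) := rfl
  rw [e, affq_sub]

theorem affq_sgnDiff_false {n : ℕ} (p q : ℚ × (Fin n → ℚ)) (x : Fin n → ℝ) :
    affq (sgnDiff false p q) x = affq p x - affq q x := by
  have e : sgnDiff false p q = (p.1 - q.1, p.2 - q.2) := rfl
  rw [e, affq_sub]

-- cells for a list of pieces
def cellL {n : ℕ} (l : List (ℚ × (Fin n → ℚ)))
    (σ : Fin l.length × Fin l.length → Bool) : List (ℚ × (Fin n → ℚ)) :=
  cubeL n ++ ((List.finRange l.length).flatMap fun j =>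
    (List.finRange l.length).map fun k => sgnDiff (σ (j, k)) (l.get j) (l.get k))

theorem cell_sub_cube {n : ℕ} (l : List (ℚ × (Fin n → ℚ)))
    (σ : Fin l.length × Fin l.length → Bool) :
    HpolyL (cellL l σ) ⊆ Cube n := by
  intro x hx
  rw [← cubeL_eq]
  intro p hp
  exact hx p (List.mem_append_left _ hp)

theorem cell_sign {n : ℕ} (l : List (ℚ × (Fin n → ℚ)))
    (σ : Fin l.length × Fin l.length → Bool) (j k : Fin l.length) :
    (∀ x ∈ HpolyL (cellL l σ), affq (l.get j) x ≤ affq (l.get k) x) ∨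
    (∀ x ∈ HpolyL (cellL l σ), affq (l.get k) x ≤ affq (l.get j) x) := by
  have hmem : sgnDiff (σ (j, k)) (l.get j) (l.get k) ∈ cellL l σ := by
    apply List.mem_append_right
    apply List.mem_flatMap.2
    exact ⟨j, List.mem_finRange j, List.mem_map.2 ⟨k, List.mem_finRange k, rfl⟩⟩
  cases hb : σ (j, k)
  · left
    intro x hx
    have h := hx _ hmem
    rw [hb, affq_sgnDiff_false] at h
    linarith
  · right
    intro x hx
    have h := hx _ hmem
    rw [hb, affq_sgnDiff_true] at h
    linarith

noncomputable def sgnOf {n : ℕ} (l : List (ℚ × (Fin n → ℚ))) (x : Fin n → ℝ) :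
    Fin l.length × Fin l.length → Bool :=
  fun jk => @decide (affq (l.get jk.2) x ≤ affq (l.get jk.1) x) (Classical.dec _)

theorem cell_cover {n : ℕ} (l : List (ℚ × (Fin n → ℚ))) {x : Fin n → ℝ}
    (hx : x ∈ Cube n) : x ∈ HpolyL (cellL l (sgnOf l x)) := by
  classical
  intro p hp
  rcases List.mem_append.1 hp with h | h
  · rw [← cubeL_eq] at hx
    exact hx p h
  · obtain ⟨j, -, hj⟩ := List.mem_flatMap.1 h
    obtain ⟨k, -, hk⟩ := List.mem_map.1 hj
    subst hk
    by_cases hle : affq (l.get k) x ≤ affq (l.get j) x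
    · have hb : sgnOf l x (j, k) = true := by
        simp only [sgnOf]
        exact decide_eq_true hle
      rw [hb, affq_sgnDiff_true]
      linarith
    · have hb : sgnOf l x (j, k) = false := by
        simp only [sgnOf]
        exact decide_eq_false hle
      rw [hb, affq_sgnDiff_false]
      push_neg at hle
      linarith

-- constancy on a cell
theorem cell_constancy {n : ℕ} (l : List (ℚ × (Fin n → ℚ)))
    (σ : Fin l.length × Fin l.length → Bool)
    (F : (Fin n → ℝ) → ℝ) (hF : Continuous F)
    (hsel : ∀ x ∈ HpolyL (cellL l σ), ∃ p ∈ l, F x = affq p x)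
    {x₀ : Fin n → ℝ} (hx₀ : x₀ ∈ HpolyL (cellL l σ)) :
    ∃ p ∈ l, ∀ x ∈ HpolyL (cellL l σ), F x = affq p x := by
  have hcon := constancy (HpolyL (cellL l σ)) (HpolyL_convex _)
    (fun j : Fin l.length => fun x => affq (l.get j) x)
    (fun j x y α β hab => affq_combo _ x y α β hab)
    (fun j => affq_cont _)
    (fun j k => cell_sign l σ j k)
    F hF ?sel hx₀
  · obtain ⟨j, hj⟩ := hcon
    exact ⟨l.get j, List.get_mem l j, hj⟩
  case sel =>
    intro x hx
    obtain ⟨p, hp, hpx⟩ := hsel x hx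
    obtain ⟨j, hj⟩ := List.mem_iff_get.1 hp
    refine ⟨j, ?_⟩
    show F x = affq (l.get j) x
    rw [hpx, hj]

theorem exists_bound {n : ℕ} {f₀ u : Cube n → ℝ} (hf₀ : IsPWLQ f₀) (hu : IsPWLQ u)
    (hvan : ∀ x, f₀ x = 0 → u x = 0) :
    ∃ m : ℕ, ∀ x, u x ≤ min ((m : ℝ) * f₀ x) 1 := by
  classical
  obtain ⟨lu, hlu⟩ := pieces_of_pwlq hu
  obtain ⟨lf, hlf⟩ := pieces_of_pwlq hf₀
  set l : List (ℚ × (Fin n → ℚ)) := lu ++ lf with hl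
  set U : (Fin n → ℝ) → ℝ := extC u with hU
  set G : (Fin n → ℝ) → ℝ := extC f₀ with hG
  have hUx : ∀ x : Cube n, U x.1 = u x := fun x => extC_eq u x
  have hGx : ∀ x : Cube n, G x.1 = f₀ x := fun x => extC_eq f₀ x
  have hUsel : ∀ x ∈ Cube n, ∃ p ∈ l, U x = affq p x := by
    intro x hx
    obtain ⟨p, hp, hpx⟩ := hlu ⟨x, hx⟩
    exact ⟨p, List.mem_append_left _ hp, by rw [hUx ⟨x, hx⟩]; exact hpx⟩
  have hGsel : ∀ x ∈ Cube n, ∃ p ∈ l, G x = affq p x := by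
    intro x hx
    obtain ⟨p, hp, hpx⟩ := hlf ⟨x, hx⟩
    exact ⟨p, List.mem_append_right _ hp, by rw [hGx ⟨x, hx⟩]; exact hpx⟩
  -- per-cell bound
  have key : ∀ σ : Fin l.length × Fin l.length → Bool,
      ∃ M : ℝ, 0 ≤ M ∧ ∀ x ∈ HpolyL (cellL l σ), U x ≤ M * G x := by
    intro σ
    by_cases hne : (HpolyL (cellL l σ)).Nonempty
    · obtain ⟨x₀, hx₀⟩ := hne
      obtain ⟨pA, -, hA⟩ := cell_constancy l σ U (extC_cont hu.1)
        (fun x hx => hUsel x (cell_sub_cube l σ hx)) hx₀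
      obtain ⟨pB, -, hB⟩ := cell_constancy l σ G (extC_cont hf₀.1)
        (fun x hx => hGsel x (cell_sub_cube l σ hx)) hx₀
      obtain ⟨V, hVsub, -, hVconv⟩ := hpolyL_conv (cellL l σ) (cell_sub_cube l σ)
      -- per-vertex bounds
      have hpv : ∀ v : Fin n → ℝ, ∃ Mv : ℝ, 0 ≤ Mv ∧ (v ∈ V → U v ≤ Mv * G v) := by
        intro v
        by_cases hv : v ∈ V
        · have hvC : v ∈ HpolyL (cellL l σ) := hVsub hv
          have hvCube : v ∈ Cube n := cell_sub_cube l σ hvC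
          have hU01 : 0 ≤ U v ∧ U v ≤ 1 := by
            rw [show U v = u ⟨v, hvCube⟩ from hUx ⟨v, hvCube⟩]
            exact hu.2.1 _
          have hG0 : 0 ≤ G v := by
            rw [show G v = f₀ ⟨v, hvCube⟩ from hGx ⟨v, hvCube⟩]
            exact (hf₀.2.1 _).1
          rcases eq_or_lt_of_le hG0 with hGz | hGpos
          · refine ⟨0, le_refl 0, fun _ => ?_⟩
            have : u ⟨v, hvCube⟩ = 0 := hvan _ (by rw [← hGx ⟨v, hvCube⟩, ← hGz])
            rw [show U v = u ⟨v, hvCube⟩ from hUx ⟨v, hvCube⟩, this]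
            norm_num
          · refine ⟨U v / G v, div_nonneg hU01.1 hGpos.le, fun _ => ?_⟩
            rw [div_mul_cancel₀ _ (ne_of_gt hGpos)]
        · exact ⟨0, le_refl 0, fun h => absurd h hv⟩
      choose Mv hMv using hpv
      set M : ℝ := ∑ v ∈ V, Mv v with hM
      have hM0 : 0 ≤ M := Finset.sum_nonneg fun v _ => (hMv v).1
      refine ⟨M, hM0, ?_⟩
      intro x hx
      have hxconv : x ∈ convexHull ℝ (V : Set (Fin n → ℝ)) := by
        rw [← hVconv]; exact hx
      rw [Finset.convexHull_eq] at hxconv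
      obtain ⟨w, hw0, hw1, hwx⟩ := hxconv
      have hAx : U x = affq pA x := hA x hx
      have hBx : G x = affq pB x := hB x hx
      rw [hAx, hBx, ← hwx, affq_centerMass pA V w hw1, affq_centerMass pB V w hw1]
      have hstep : ∀ v ∈ V, w v * affq pA v ≤ w v * (M * affq pB v) := by
        intro v hv
        apply mul_le_mul_of_nonneg_left _ (hw0 v hv)
        have hvC : v ∈ HpolyL (cellL l σ) := hVsub hv
        have hUv : U v = affq pA v := hA v hvC
        have hGv : G v = affq pB v := hB v hvC
        rw [← hUv, ← hGv]
        have h1 := (hMv v).2 hv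
        have hMvM : Mv v ≤ M := by
          rw [hM]
          exact Finset.single_le_sum (fun v _ => (hMv v).1) hv
        have hGv0 : 0 ≤ G v := by
          have hvCube : v ∈ Cube n := cell_sub_cube l σ hvC
          rw [show G v = f₀ ⟨v, hvCube⟩ from hGx ⟨v, hvCube⟩]
          exact (hf₀.2.1 _).1
        calc U v ≤ Mv v * G v := h1
          _ ≤ M * G v := mul_le_mul_of_nonneg_right hMvM hGv0
      calc ∑ v ∈ V, w v * affq pA v ≤ ∑ v ∈ V, w v * (M * affq pB v) :=
            Finset.sum_le_sum hstep
        _ = M * ∑ v ∈ V, w v * affq pB v := by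
            rw [Finset.mul_sum]
            exact Finset.sum_congr rfl fun v _ => by ring
    · exact ⟨0, le_refl 0, fun x hx => absurd ⟨x, hx⟩ hne⟩
  choose M hM0 hMle using key
  have hinst : Nonempty (Fin l.length × Fin l.length → Bool) := inferInstance
  set Mmax : ℝ := Finset.univ.sup' Finset.univ_nonempty M with hMmax
  refine ⟨⌈Mmax⌉₊, ?_⟩
  intro x
  refine le_min ?_ (hu.2.1 x).2
  have hσ := cell_cover l x.2
  have h1 := hMle (sgnOf l x.1) x.1 hσ
  rw [hUx x, hGx x] at h1
  have h2 : M (sgnOf l x.1) ≤ Mmax := Finset.le_sup' M (Finset.mem_univ _)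
  have h3 : Mmax ≤ (⌈Mmax⌉₊ : ℝ) := Nat.le_ceil Mmax
  have hf0 : 0 ≤ f₀ x := (hf₀.2.1 x).1
  calc u x ≤ M (sgnOf l x.1) * f₀ x := h1
    _ ≤ (⌈Mmax⌉₊ : ℝ) * f₀ x :=
        mul_le_mul_of_nonneg_right (le_trans h2 h3) hf0

theorem affq_neg {n : ℕ} (p : ℚ × (Fin n → ℚ)) (x : Fin n → ℝ) :
    affq (-p.1, fun j => -(p.2 j)) x = - affq p x := by
  simp only [affq]
  push_cast
  rw [Finset.sum_congr rfl (fun j _ => by ring :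
      ∀ j ∈ Finset.univ, (-(p.2 j : ℝ)) * x j = -((p.2 j : ℝ) * x j)),
    Finset.sum_neg_distrib]
  ring

theorem ratpoly_zero_set {n : ℕ} {f₀ : Cube n → ℝ} (hf₀ : IsPWLQ f₀) :
    IsRatPoly (Subtype.val '' {x : Cube n | f₀ x = 0}) := by
  classical
  obtain ⟨l, hlf⟩ := pieces_of_pwlq hf₀
  set G : (Fin n → ℝ) → ℝ := extC f₀ with hG
  have hGx : ∀ x : Cube n, G x.1 = f₀ x := fun x => extC_eq f₀ x
  have hGsel : ∀ x ∈ Cube n, ∃ p ∈ l, G x = affq p x := by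
    intro x hx
    obtain ⟨p, hp, hpx⟩ := hlf ⟨x, hx⟩
    exact ⟨p, hp, by rw [hGx ⟨x, hx⟩]; exact hpx⟩
  set Z : Set (Fin n → ℝ) := Subtype.val '' {x : Cube n | f₀ x = 0} with hZdef
  -- per-cell polytopes
  have key : ∀ σ : Fin l.length × Fin l.length → Bool,
      ∃ W : Finset (Fin n → ℝ), (∀ v ∈ W, HasRatCoords v) ∧
        (convexHull ℝ (W : Set (Fin n → ℝ)) ⊆ Z) ∧
        (∀ x ∈ HpolyL (cellL l σ), G x = 0 →
          x ∈ convexHull ℝ (W : Set (Fin n → ℝ))) := by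
    intro σ
    by_cases hne : (HpolyL (cellL l σ)).Nonempty
    · obtain ⟨x₀, hx₀⟩ := hne
      obtain ⟨pB, -, hB⟩ := cell_constancy l σ G (extC_cont hf₀.1)
        (fun x hx => hGsel x (cell_sub_cube l σ hx)) hx₀
      set l2 : List (ℚ × (Fin n → ℚ)) :=
        cellL l σ ++ [pB, (-pB.1, fun j => -(pB.2 j))] with hl2
      have hl2cell : HpolyL l2 ⊆ HpolyL (cellL l σ) :=
        fun x hx p hp => hx p (List.mem_append_left _ hp)
      have hsub2 : HpolyL l2 ⊆ Cube n := fun x hx => cell_sub_cube l σ (hl2cell hx)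
      obtain ⟨W, hWsub, hWrat, hWconv⟩ := hpolyL_conv l2 hsub2
      refine ⟨W, hWrat, ?_, ?_⟩
      · intro x hx
        rw [← hWconv] at hx
        have hxcell := hl2cell hx
        have hxCube : x ∈ Cube n := hsub2 hx
        have h1 : affq pB x ≤ 0 := hx pB
          (List.mem_append_right _ (List.mem_cons_self))
        have h2 : affq (-pB.1, fun j => -(pB.2 j)) x ≤ 0 := hx _
          (List.mem_append_right _ (List.mem_cons_of_mem _ (List.mem_singleton.2 rfl)))
        rw [affq_neg] at h2
        have hBx : affq pB x = 0 := le_antisymm h1 (by linarith)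
        have hGz : f₀ ⟨x, hxCube⟩ = 0 := by
          rw [← hGx ⟨x, hxCube⟩]
          rw [show G x = affq pB x from hB x hxcell, hBx]
        exact ⟨⟨x, hxCube⟩, hGz, rfl⟩
      · intro x hx hGz
        rw [← hWconv]
        intro p hp
        rcases List.mem_append.1 hp with h | h
        · exact hx p h
        · have hBx : affq pB x = 0 := by
            rw [← hB x hx]; exact hGz
          rcases List.mem_cons.1 h with rfl | h'
          · rw [hBx]
          · rw [List.mem_singleton.1 h', affq_neg, hBx, neg_zero]
    · refine ⟨∅, by simp, ?_, fun x hx _ => absurd ⟨x, hx⟩ hne⟩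
      rw [Finset.coe_empty, convexHull_empty]
      exact Set.empty_subset _
  choose W hWrat hWZ hWcov using key
  -- the zero set as a finite union of polytopes
  have hZeq : Z = ⋃ σ, convexHull ℝ (W σ : Set (Fin n → ℝ)) := by
    apply le_antisymm
    · rintro y ⟨x, hx, rfl⟩
      refine Set.mem_iUnion.2 ⟨sgnOf l x.1, ?_⟩
      refine hWcov (sgnOf l x.1) x.1 (cell_cover l x.2) ?_
      rw [hGx x]
      exact hx
    · exact Set.iUnion_subset fun σ => hWZ σ
  -- Caratheodory
  set BigW : Finset (Finset (Fin n → ℝ)) :=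
    Finset.univ.biUnion (fun σ : Fin l.length × Fin l.length → Bool =>
      (W σ).powerset.filter
        (fun t => AffineIndependent ℝ ((↑) : ((t : Set (Fin n → ℝ))) → (Fin n → ℝ))))
    with hBigW
  have hZeq2 : Z = ⋃ t ∈ BigW, convexHull ℝ (t : Set (Fin n → ℝ)) := by
    rw [hZeq]
    apply le_antisymm
    · refine Set.iUnion_subset fun σ => ?_
      intro x hx
      rw [convexHull_eq_union] at hx
      simp only [Set.mem_iUnion] at hx
      obtain ⟨t, hts, hai, hxt⟩ := hx
      refine Set.mem_biUnion ?_ hxt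
      refine Finset.mem_biUnion.2 ⟨σ, Finset.mem_univ _, ?_⟩
      refine Finset.mem_filter.2 ⟨Finset.mem_powerset.2 (Finset.coe_subset.1 hts), hai⟩
    · refine Set.iUnion₂_subset fun t ht => ?_
      obtain ⟨σ, -, hmem⟩ := Finset.mem_biUnion.1 ht
      have hts := Finset.mem_powerset.1 (Finset.mem_filter.1 hmem).1
      refine Set.Subset.trans (convexHull_mono (Finset.coe_subset.2 hts)) ?_
      exact Set.subset_iUnion (fun σ => convexHull ℝ ((W σ : Set (Fin n → ℝ)))) σ
  -- package as IsRatPoly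
  refine ⟨BigW.card, fun i => (BigW.equivFin.symm i : { t // t ∈ BigW }).1, ?_, ?_⟩
  · intro j
    have hj : ((BigW.equivFin.symm j : { t // t ∈ BigW }).1 : Finset (Fin n → ℝ)) ∈ BigW :=
      (BigW.equivFin.symm j).2
    obtain ⟨σ, -, hmem⟩ := Finset.mem_biUnion.1 hj
    have hts := Finset.mem_powerset.1 (Finset.mem_filter.1 hmem).1
    refine ⟨fun v hv => hWrat σ v (hts hv), (Finset.mem_filter.1 hmem).2⟩
  · rw [hZeq2]
    apply le_antisymm
    · refine Set.iUnion₂_subset fun t ht => ?_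
      intro x hx
      refine Set.mem_iUnion.2 ⟨BigW.equivFin ⟨t, ht⟩, ?_⟩
      simp only [Equiv.symm_apply_apply]
      exact hx
    · refine Set.iUnion_subset fun j => ?_
      intro x hx
      exact Set.mem_biUnion (BigW.equivFin.symm j).2 hx

section Glue

variable {n : ℕ} {f₀ : Cube n → ℝ} {D : Type} [DMVAlgebra D]
  {π : {f : Cube n → ℝ // IsPWLQ f} → D}

/-- `π (1 ⊖ ((1 ⊖ G) ⊕ H)) = (G* ⊕ H... )` computation of the truncated difference. -/
theorem pi_T (hπ : IsQuotientByIdeal {g | memGen f₀ g} D π)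
    (G H : {f : Cube n → ℝ // IsPWLQ f}) :
    π ⟨fun x => 1 - min ((1 - G.1 x) + H.1 x) 1,
        pwlq_star (pwlq_oplus (pwlq_star G.2) H.2)⟩
      = MVAlgebra.star (MVAlgebra.oplus (MVAlgebra.star (π G)) (π H)) := by
  obtain ⟨hsurj, hoplus, hstar, hdelta, hker⟩ := hπ
  have h1 : π ⟨fun x => 1 - G.1 x, pwlq_star G.2⟩ = MVAlgebra.star (π G) :=
    hstar G _ (fun x => rfl)
  have h2 : π ⟨fun x => min ((1 - G.1 x) + H.1 x) 1, pwlq_oplus (pwlq_star G.2) H.2⟩ =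
      MVAlgebra.oplus (MVAlgebra.star (π G)) (π H) := by
    rw [← h1]
    exact hoplus _ H _ (fun x => rfl)
  rw [← h2]
  exact hstar _ _ (fun x => rfl)

theorem keyA (hπ : IsQuotientByIdeal {g | memGen f₀ g} D π) (hf₀ : IsPWLQ f₀)
    (G H : {f : Cube n → ℝ // IsPWLQ f}) (hGH : π G = π H) :
    ∀ x : Cube n, f₀ x = 0 → G.1 x ≤ H.1 x := by
  intro x hx
  have hs := pi_T hπ G H
  have hs' := pi_T hπ H H
  rw [hGH] at hs
  -- the function in hs' is the zero function
  have e : (⟨fun x => 1 - min ((1 - H.1 x) + H.1 x) 1,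
      pwlq_star (pwlq_oplus (pwlq_star H.2) H.2)⟩ :
        {f : Cube n → ℝ // IsPWLQ f}) = ⟨fun _ => 0, pwlq_zero⟩ := by
    apply Subtype.ext
    funext y
    have : (1 - H.1 y) + H.1 y = 1 := by ring
    simp [this]
  rw [e] at hs'
  have hz : π (⟨fun _ => 0, pwlq_zero⟩ : {f : Cube n → ℝ // IsPWLQ f}) =
      MVAlgebra.zero := (hπ.2.2.2.2 _).2 (memGen_zero f₀)
  have hker := (hπ.2.2.2.2
    (⟨fun x => 1 - min ((1 - G.1 x) + H.1 x) 1,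
        pwlq_star (pwlq_oplus (pwlq_star G.2) H.2)⟩ : {f : Cube n → ℝ // IsPWLQ f})).1
    (by rw [hs, ← hs', hz])
  have hv : (1 : ℝ) - min ((1 - G.1 x) + H.1 x) 1 = 0 :=
    vanish_of_memGen hf₀ hker hx
  rcases le_or_gt ((1 - G.1 x) + H.1 x) 1 with hc | hc
  · rw [min_eq_left hc] at hv; linarith
  · linarith

theorem keyB (hπ : IsQuotientByIdeal {g | memGen f₀ g} D π) (hf₀ : IsPWLQ f₀)
    (G H : {f : Cube n → ℝ // IsPWLQ f})
    (hGH : ∀ x : Cube n, f₀ x = 0 → G.1 x = H.1 x) : π G = π H := by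
  have key : ∀ (G H : {f : Cube n → ℝ // IsPWLQ f}),
      (∀ x : Cube n, f₀ x = 0 → G.1 x = H.1 x) →
      MVAlgebra.star (MVAlgebra.oplus (MVAlgebra.star (π G)) (π H)) =
        (MVAlgebra.zero : D) := by
    intro G H hGH
    rw [← pi_T hπ G H]
    apply (hπ.2.2.2.2 _).2
    have hspwlq : IsPWLQ (fun x : Cube n => 1 - min ((1 - G.1 x) + H.1 x) 1) :=
      pwlq_star (pwlq_oplus (pwlq_star G.2) H.2)
    have hvan : ∀ x : Cube n, f₀ x = 0 →
        (1 : ℝ) - min ((1 - G.1 x) + H.1 x) 1 = 0 := by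
      intro x hx
      rw [hGH x hx]
      have : (1 - H.1 x) + H.1 x = 1 := by ring
      simp [this]
    obtain ⟨m, hm⟩ := exists_bound hf₀ hspwlq hvan
    exact memGen_of_le_iter hf₀ hspwlq m hm
  have h1 := key G H (fun x hx => hGH x hx)
  have h2 := key H G (fun x hx => (hGH x hx).symm)
  have luk := MVAlgebra.lukasiewicz (π G) (π H)
  rw [h1, h2] at luk
  rw [MVAlgebra.oplus_comm, MVAlgebra.oplus_zero, MVAlgebra.oplus_comm,
    MVAlgebra.oplus_zero] at luk
  exact luk.symm

end Glue

end DMVP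

/-- Let `J = (f₀]` be a principal ideal of `DMV_n` and let `D` be the
quotient `DMV_n / J`. Then there is a rational polyhedron `P ⊆ [0,1]^n`, namely
`P = V(J)`, such that `D` is isomorphic to `DMV_n|_P`, the algebra of restrictions to
`P` of continuous piecewise linear functions with rational coefficients: the natural
map `π f ↦ f|_P` is an injection of `D` into the functions on `P` (whose image is
exactly `DMV_n|_P`, by surjectivity of `π`). -/
theorem quotient_by_principal_iso_restriction (n : ℕ)
    (f₀ : Cube n → ℝ) (hf₀ : IsPWLQ f₀)
    (D : Type) [DMVAlgebra D]
    (π : {f : Cube n → ℝ // IsPWLQ f} → D)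
    (hπ : IsQuotientByIdeal {g | memGen f₀ g} D π) :
    ∃ (P : Set (Fin n → ℝ)) (hP : P ⊆ Cube n), IsRatPoly P ∧
      -- `P = V(J)`
      (∀ x : Cube n, ((x : Fin n → ℝ) ∈ P ↔
        ∀ g : Cube n → ℝ, memGen f₀ g → g x = 0)) ∧
      -- `D ≅ DMV_n|_P` via the natural map induced by restriction
      ∃ Φ : D → (P → ℝ), Function.Injective Φ ∧
        ∀ (g : {f : Cube n → ℝ // IsPWLQ f}) (y : P),
          Φ (π g) y = g.1 ⟨y.1, hP y.2⟩ := by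
  classical
  set P : Set (Fin n → ℝ) := Subtype.val '' {x : Cube n | f₀ x = 0} with hPdef
  have hP : P ⊆ Cube n := by
    rintro y ⟨x, hx, rfl⟩
    exact x.2
  have hmemP : ∀ x : Cube n, (x : Fin n → ℝ) ∈ P ↔ f₀ x = 0 := by
    intro x
    constructor
    · rintro ⟨x', hx', hval⟩
      rwa [Subtype.ext hval] at hx'
    · intro hx
      exact ⟨x, hx, rfl⟩
  refine ⟨P, hP, DMVP.ratpoly_zero_set hf₀, ?_, ?_⟩
  · intro x
    rw [hmemP x]
    constructor
    · intro hx g hg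
      exact DMVP.vanish_of_memGen hf₀ hg hx
    · intro h
      exact h f₀ (DMVP.memGen_self f₀)
  · have hsurj := hπ.1
    refine ⟨fun d y => (hsurj d).choose.1 ⟨y.1, hP y.2⟩, ?_, ?_⟩
    · intro d d' hdd'
      have h1 := (hsurj d).choose_spec
      have h2 := (hsurj d').choose_spec
      rw [← h1, ← h2]
      apply DMVP.keyB hπ hf₀
      intro x hx
      have hxP : (x : Fin n → ℝ) ∈ P := (hmemP x).2 hx
      have := congrFun hdd' ⟨x.1, hxP⟩
      simpa using this
    · intro g y
      have h1 := (hsurj (π g)).choose_spec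
      have hle := DMVP.keyA hπ hf₀ _ g h1
      have hge := DMVP.keyA hπ hf₀ g _ h1.symm
      obtain ⟨x, hx, hval⟩ := y.2
      have hx0 : f₀ ⟨y.1, hP y.2⟩ = 0 := by
        have : (⟨y.1, hP y.2⟩ : Cube n) = x := Subtype.ext hval.symm
        rw [this]; exact hx
      exact le_antisymm (hle _ hx0) (hge _ hx0)
end
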